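/- arXiv:2401.07412 — 10 statements merged into one kernel-verified Lean document; each statement's English description precedes it below -/
import Mathlib

section
/- Let k be a positive integer with det(A^k − I) ≠ 0. The map Ψ_k : BF_k(A) → 𝕋^b given by n + Γ_k ↦ (A^k − I)^{-1} n + ℤ^b is a well-defined injective group homomorphism, and its image is exactly the fixed point set Fix(Φ_A^k) = { y ∈ 𝕋^b : Φ_A^k(y) = y }. In particular, Fix(Φ_A^k) is a subgroup of 𝕋^b isomorphic to BF_k(A). -/
open Matrix Filter

/-- The coercion of an integer vector to a real vector. -/
noncomputable def intVec {b : ℕ} (n : Fin b → ℤ) : Fin b → ℝ := fun i => (n i : ℝ)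

/-- The integer lattice `ℤ^b` as an additive subgroup of `ℝ^b`. -/
def latticeZ (b : ℕ) : AddSubgroup (Fin b → ℝ) where
  carrier := Set.range (fun n : Fin b → ℤ => intVec n)
  add_mem' := by rintro _ _ ⟨m, rfl⟩ ⟨n, rfl⟩; exact ⟨m + n, by funext i; simp [intVec]⟩
  zero_mem' := ⟨0, by funext i; simp [intVec]⟩
  neg_mem' := by rintro _ ⟨n, rfl⟩; exact ⟨-n, by funext i; simp [intVec]⟩

/-- The torus `𝕋^b = ℝ^b / ℤ^b`. -/
abbrev Torus (b : ℕ) := (Fin b → ℝ) ⧸ latticeZ b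

/-- The projection `π : ℝ^b → 𝕋^b`. -/
noncomputable def projT (b : ℕ) : (Fin b → ℝ) →+ Torus b := QuotientAddGroup.mk' (latticeZ b)

/-- The real matrix associated to an integer matrix. -/
noncomputable def realMat {b : ℕ} (A : Matrix (Fin b) (Fin b) ℤ) : Matrix (Fin b) (Fin b) ℝ :=
  A.map (Int.cast)

lemma castVec {b : ℕ} (M : Matrix (Fin b) (Fin b) ℤ) (n : Fin b → ℤ) :
    intVec (M.mulVec n) = (realMat M).mulVec (intVec n) := by
  funext i
  simp [intVec, realMat, Matrix.mulVec, dotProduct]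

lemma intVec_inj {b : ℕ} : Function.Injective (intVec (b := b)) := by
  intro m n h
  funext i
  have h2 : (m i : ℝ) = n i := congrFun h i
  exact_mod_cast h2

lemma realMat_key {b : ℕ} (A : Matrix (Fin b) (Fin b) ℤ) (k : ℕ) :
    realMat (A ^ k - 1) = realMat A ^ k - 1 := by
  have h : ∀ M : Matrix (Fin b) (Fin b) ℤ, realMat M = (Int.castRingHom ℝ).mapMatrix M :=
    fun M => rfl
  rw [h, h, map_sub, map_pow, _root_.map_one]

lemma projT_eq_zero_iff {b : ℕ} (x : Fin b → ℝ) : projT b x = 0 ↔ x ∈ latticeZ b := by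
  rw [projT, QuotientAddGroup.mk'_apply]
  exact QuotientAddGroup.eq_zero_iff x

/-- `Ψ_k : BF_k(A) → 𝕋^b`, `n + Γ_k ↦ (A^k − I)⁻¹ n + ℤ^b`, is a well-defined
injective group homomorphism whose image is exactly `Fix(Φ_A^k)`; in particular `Fix(Φ_A^k)`
is a subgroup of `𝕋^b` isomorphic to `BF_k(A)`. -/
theorem stmt2 (b : ℕ) (hb : 1 ≤ b) (A : Matrix (Fin b) (Fin b) ℤ) (k : ℕ) (hk : 0 < k)
    (hdet : (A ^ k - 1).det ≠ 0)
    (Φ : Torus b → Torus b)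
    (hΦ : ∀ x : Fin b → ℝ, Φ (projT b x) = projT b ((realMat A).mulVec x)) :
    ∃ Ψ : ((Fin b → ℤ) ⧸ LinearMap.range (Matrix.mulVecLin (A ^ k - 1))) →+ Torus b,
      Function.Injective Ψ ∧
      (∀ n : Fin b → ℤ, Ψ (Submodule.Quotient.mk n) =
        projT b ((realMat A ^ k - 1)⁻¹.mulVec (intVec n))) ∧
      Set.range Ψ = {y : Torus b | Φ^[k] y = y} ∧
      ∃ H : AddSubgroup (Torus b), (H : Set (Torus b)) = {y : Torus b | Φ^[k] y = y} := by
  set B := A ^ k - 1 with hB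
  set R := realMat A ^ k - 1 with hR
  have hRB : R = realMat B := (realMat_key A k).symm
  have hdetR : IsUnit R.det := by
    rw [hRB]
    have h2 : (realMat B).det = ((B.det : ℤ) : ℝ) := by
      show ((Int.castRingHom ℝ).mapMatrix B).det = _
      rw [← RingHom.map_det]; rfl
    rw [h2]
    exact isUnit_iff_ne_zero.mpr (by exact_mod_cast hdet)
  have hinvR : R⁻¹ * R = 1 := Matrix.nonsing_inv_mul R hdetR
  have hRinv : R * R⁻¹ = 1 := Matrix.mul_nonsing_inv R hdetR
  have hintadd : ∀ m n : Fin b → ℤ, intVec (m + n) = intVec m + intVec n := by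
    intro m n; funext i; simp [intVec]
  have hint0 : intVec (0 : Fin b → ℤ) = 0 := by funext i; simp [intVec]
  let g : (Fin b → ℤ) →+ Torus b :=
    { toFun := fun n => projT b (R⁻¹.mulVec (intVec n))
      map_zero' := by simp [hint0]
      map_add' := by
        intro m n
        show projT b (R⁻¹.mulVec (intVec (m + n))) =
          projT b (R⁻¹.mulVec (intVec m)) + projT b (R⁻¹.mulVec (intVec n))
        rw [hintadd, Matrix.mulVec_add, map_add] }
  let f : (Fin b → ℤ) →ₗ[ℤ] Torus b := g.toIntLinearMap
  have hf : ∀ n, f n = projT b (R⁻¹.mulVec (intVec n)) := fun n => rfl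
  have hcancel : ∀ m : Fin b → ℤ, R⁻¹.mulVec (intVec (B.mulVec m)) = intVec m := by
    intro m
    rw [castVec, ← hRB, Matrix.mulVec_mulVec, hinvR, Matrix.one_mulVec]
  have hle : LinearMap.range (Matrix.mulVecLin B) ≤ LinearMap.ker f := by
    rintro _ ⟨m, rfl⟩
    show projT b (R⁻¹.mulVec (intVec (B.mulVec m))) = 0
    rw [hcancel]
    exact (projT_eq_zero_iff _).mpr ⟨m, rfl⟩
  let Ψlin := Submodule.liftQ (LinearMap.range (Matrix.mulVecLin B)) f hle
  have hΨapp : ∀ n : Fin b → ℤ, Ψlin (Submodule.Quotient.mk n) =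
      projT b (R⁻¹.mulVec (intVec n)) := fun n => rfl
  have hker : LinearMap.ker f ≤ LinearMap.range (Matrix.mulVecLin B) := by
    intro n hn
    have h0 : projT b (R⁻¹.mulVec (intVec n)) = 0 := hn
    obtain ⟨m, hm⟩ := (projT_eq_zero_iff _).mp h0
    refine ⟨m, ?_⟩
    apply intVec_inj
    have h1 : R.mulVec (intVec m) = R.mulVec (R⁻¹.mulVec (intVec n)) := by rw [← hm]
    rw [Matrix.mulVec_mulVec, hRinv, Matrix.one_mulVec] at h1
    rw [show (Matrix.mulVecLin B) m = B.mulVec m from rfl, castVec, ← hRB, h1]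
  have hinj : Function.Injective Ψlin := by
    rw [← LinearMap.ker_eq_bot]
    exact Submodule.ker_liftQ_eq_bot _ _ _ hker
  have hΦk : ∀ (j : ℕ) (x : Fin b → ℝ),
      Φ^[j] (projT b x) = projT b ((realMat A ^ j).mulVec x) := by
    intro j
    induction j with
    | zero => intro x; simp [Matrix.one_mulVec]
    | succ j ih =>
      intro x
      rw [Function.iterate_succ_apply, hΦ, ih, Matrix.mulVec_mulVec, ← pow_succ]
  have hsurj : Function.Surjective (projT b) := QuotientAddGroup.mk'_surjective _
  have hrange : Set.range Ψlin = {y : Torus b | Φ^[k] y = y} := by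
    ext y
    constructor
    · rintro ⟨q, rfl⟩
      obtain ⟨n, rfl⟩ := Submodule.Quotient.mk_surjective _ q
      rw [hΨapp]
      show Φ^[k] _ = _
      rw [hΦk]
      have hdiff : (realMat A ^ k).mulVec (R⁻¹.mulVec (intVec n)) -
          R⁻¹.mulVec (intVec n) = intVec n := by
        have h1 : (realMat A ^ k).mulVec (R⁻¹.mulVec (intVec n)) - R⁻¹.mulVec (intVec n)
            = R.mulVec (R⁻¹.mulVec (intVec n)) := by
          rw [hR, Matrix.sub_mulVec, Matrix.one_mulVec]
        rw [h1, Matrix.mulVec_mulVec, hRinv, Matrix.one_mulVec]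
      rw [← sub_eq_zero, ← map_sub, hdiff]
      exact (projT_eq_zero_iff _).mpr ⟨n, rfl⟩
    · intro hy
      obtain ⟨x, rfl⟩ := hsurj y
      rw [Set.mem_setOf_eq, hΦk, ← sub_eq_zero, ← map_sub, projT_eq_zero_iff] at hy
      obtain ⟨n, hn⟩ := hy
      refine ⟨Submodule.Quotient.mk n, ?_⟩
      rw [hΨapp]
      congr 1
      have h1 : R.mulVec x = intVec n := by
        rw [hR, Matrix.sub_mulVec, Matrix.one_mulVec]; exact hn.symm
      rw [← h1, Matrix.mulVec_mulVec, hinvR, Matrix.one_mulVec]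
  refine ⟨Ψlin.toAddMonoidHom, hinj, hΨapp, hrange, Ψlin.toAddMonoidHom.range, ?_⟩
  rw [AddMonoidHom.coe_range]
  exact hrange
end

section
/- Let f̃ : ℝ^b → ℝ^b be an A-equivariant lift, and let x̃, x̃' ∈ ℝ^b and m, m' ∈ ℤ^b satisfy f̃(x̃) = x̃ + m and f̃(x̃') = x̃' + m' (so the projections of x̃ and x̃' are fixed points of the induced map f : 𝕋^b → 𝕋^b). Then m − m' ∈ (A − I)ℤ^b if and only if there exist k, p, q ∈ ℤ^b such that the lift g̃ of f defined by g̃(z̃) = f̃(z̃) + k fixes both x̃ + p and x̃' + q. In other words, two fixed points of f have the same displacement class in ℤ^b/(A − I)ℤ^b if and only if some common lift of f fixes a lift of each of them. -/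
open Matrix Filter

lemma intVec_add {b : ℕ} (a c : Fin b → ℤ) : intVec (a + c) = intVec a + intVec c := by
  funext i; simp [intVec]

lemma intVec_inj_s6 {b : ℕ} {a c : Fin b → ℤ} (h : intVec a = intVec c) : a = c := by
  funext i
  have := congrFun h i
  simpa [intVec] using this

lemma realMat_mulVec {b : ℕ} (A : Matrix (Fin b) (Fin b) ℤ) (n : Fin b → ℤ) :
    (realMat A).mulVec (intVec n) = intVec (A.mulVec n) := by
  funext i
  simp [realMat, intVec, Matrix.mulVec, dotProduct]

/-- Two fixed points of the induced torus map have the same displacement class in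
`ℤ^b/(A − I)ℤ^b` if and only if some common lift of the map fixes a lift of each of them. -/
theorem stmt6 (b : ℕ) (hb : 1 ≤ b) (A : Matrix (Fin b) (Fin b) ℤ)
    (f : (Fin b → ℝ) → (Fin b → ℝ)) (hcont : Continuous f)
    (hequiv : ∀ (x : Fin b → ℝ) (n : Fin b → ℤ),
      f (x + intVec n) = f x + (realMat A).mulVec (intVec n))
    (x x' : Fin b → ℝ) (m m' : Fin b → ℤ)
    (hx : f x = x + intVec m) (hx' : f x' = x' + intVec m') :
    (∃ w : Fin b → ℤ, m - m' = (A - 1).mulVec w) ↔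
    ∃ k p q : Fin b → ℤ,
      f (x + intVec p) + intVec k = x + intVec p ∧
      f (x' + intVec q) + intVec k = x' + intVec q := by
  have hA : ∀ w : Fin b → ℤ, (A - 1).mulVec w = A.mulVec w - w := fun w => by
    rw [Matrix.sub_mulVec, Matrix.one_mulVec]
  constructor
  · rintro ⟨w, hw⟩
    rw [hA] at hw
    refine ⟨-m, 0, w, ?_, ?_⟩
    · have h0 : intVec (0 : Fin b → ℤ) = 0 := by funext i; simp [intVec]
      rw [h0, add_zero, hx]
      funext i
      simp [intVec]
    · rw [hequiv, hx', realMat_mulVec]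
      have key : m' + A.mulVec w + -m = w := by
        funext i
        have h2 := congrFun hw i
        simp only [Pi.sub_apply, Pi.add_apply, Pi.neg_apply] at h2 ⊢
        omega
      have h' : intVec m' + intVec (A.mulVec w) + intVec (-m) = intVec w := by
        rw [← intVec_add, ← intVec_add]; exact congrArg intVec key
      linear_combination h'
  · rintro ⟨k, p, q, h1, h2⟩
    rw [hequiv, hx, realMat_mulVec] at h1
    rw [hequiv, hx', realMat_mulVec] at h2
    have e1 : m + A.mulVec p + k = p := by
      apply intVec_inj_s6
      rw [intVec_add, intVec_add]
      linear_combination h1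
    have e2 : m' + A.mulVec q + k = q := by
      apply intVec_inj_s6
      rw [intVec_add, intVec_add]
      linear_combination h2
    refine ⟨q - p, ?_⟩
    rw [hA, Matrix.mulVec_sub]
    funext i
    have a1 := congrFun e1 i
    have a2 := congrFun e2 i
    simp only [Pi.sub_apply, Pi.add_apply] at a1 a2 ⊢
    omega
end

section
/- Let f̃ : ℝ^b → ℝ^b be an A-equivariant lift, let k be a positive integer, and suppose f̃^k(x̃) = x̃ + n and A^k ỹ = ỹ + n' with n − n' ∈ (A^k − I)ℤ^b (i.e. the period-k point π(x̃) of f and the period-k point π(ỹ) of Φ_A have the same displacement class in ℤ^b/(A^k − I)ℤ^b). Then there exist m ∈ ℤ^b and a constant K such that ‖f̃^j(x̃) − A^j(ỹ + m)‖ ≤ K for all j ∈ ℕ; that is, the orbit of π(x̃) under f and the orbit of π(ỹ) under Φ_A globally shadow. -/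
open Matrix Filter

/-- If the period-`k` point of `f` represented by `x̃` and the period-`k` point of
`Φ_A` represented by `ỹ` have the same displacement class in `ℤ^b/(A^k − I)ℤ^b`, then for some
lift `ỹ + m` the orbits globally shadow: `‖f̃^j(x̃) − A^j(ỹ + m)‖ ≤ K` for all `j`. -/
theorem stmt7 (b : ℕ) (hb : 1 ≤ b) (A : Matrix (Fin b) (Fin b) ℤ)
    (f : (Fin b → ℝ) → (Fin b → ℝ)) (hcont : Continuous f)
    (hequiv : ∀ (x : Fin b → ℝ) (n : Fin b → ℤ),
      f (x + intVec n) = f x + (realMat A).mulVec (intVec n))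
    (k : ℕ) (hk : 0 < k)
    (x y : Fin b → ℝ) (n n' : Fin b → ℤ)
    (hx : f^[k] x = x + intVec n)
    (hy : (realMat A ^ k).mulVec y = y + intVec n')
    (w : Fin b → ℤ) (hw : n - n' = (A ^ k - 1).mulVec w) :
    ∃ (m : Fin b → ℤ) (K : ℝ), ∀ j : ℕ,
      ‖f^[j] x - (realMat A ^ j).mulVec (y + intVec m)‖ ≤ K := by
  have hint : ∀ (M : Matrix (Fin b) (Fin b) ℤ) (v : Fin b → ℤ),
      (realMat M).mulVec (intVec v) = intVec (M.mulVec v) := by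
    intro M v
    funext i
    simp [realMat, intVec, Matrix.mulVec, dotProduct]
  have hintadd : ∀ (u v : Fin b → ℤ), intVec (u + v) = intVec u + intVec v := by
    intro u v; funext i; simp [intVec]
  have hpow : ∀ j : ℕ, realMat A ^ j = realMat (A ^ j) := by
    intro j
    have h : ∀ M : Matrix (Fin b) (Fin b) ℤ, realMat M = (Int.castRingHom ℝ).mapMatrix M := by
      intro M; rfl
    rw [h, h, map_pow]
  -- equivariance of iterates
  have hiter : ∀ (j : ℕ) (z : Fin b → ℝ) (v : Fin b → ℤ),
      f^[j] (z + intVec v) = f^[j] z + (realMat A ^ j).mulVec (intVec v) := by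
    intro j
    induction j with
    | zero => intro z v; simp
    | succ j ih =>
      intro z v
      rw [Function.iterate_succ_apply, Function.iterate_succ_apply, hequiv, hint,
        ih (f z) (A.mulVec v), ← hint, Matrix.mulVec_mulVec, ← pow_succ]
  set m := w with hm
  set Y := y + intVec w with hY
  -- key displacement identity for Y
  have hYk : (realMat A ^ k).mulVec Y = Y + intVec n := by
    have h1 : (realMat A ^ k).mulVec Y
        = (realMat A ^ k).mulVec y + (realMat A ^ k).mulVec (intVec w) := by
      rw [hY, Matrix.mulVec_add]
    have h2 : (realMat A ^ k).mulVec (intVec w) = intVec ((A ^ k).mulVec w) := by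
      rw [hpow, hint]
    have h3 : n' + (A ^ k).mulVec w = n + w := by
      have : (A ^ k - 1).mulVec w = (A ^ k).mulVec w - w := by
        rw [Matrix.sub_mulVec, Matrix.one_mulVec]
      rw [this] at hw
      have := hw
      abel_nf
      abel_nf at this
      linear_combination (norm := abel_nf) -this
    rw [h1, h2, hy, hY]
    rw [add_assoc, ← hintadd, h3, hintadd]
    abel
  -- the difference sequence
  set g : ℕ → (Fin b → ℝ) := fun j => f^[j] x - (realMat A ^ j).mulVec Y with hg
  have hper : ∀ j, g (j + k) = g j := by
    intro j
    have hfx : f^[j + k] x = f^[j] x + (realMat A ^ j).mulVec (intVec n) := by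
      rw [Function.iterate_add_apply, hx, hiter]
    have hAy : (realMat A ^ (j + k)).mulVec Y
        = (realMat A ^ j).mulVec Y + (realMat A ^ j).mulVec (intVec n) := by
      rw [pow_add, ← Matrix.mulVec_mulVec, hYk, Matrix.mulVec_add]
    simp only [hg, hfx, hAy]
    abel
  have hmod : ∀ j, g j = g (j % k) := by
    intro j
    induction j using Nat.strong_induction_on with
    | _ j ih =>
      rcases lt_or_ge j k with h | h
      · rw [Nat.mod_eq_of_lt h]
      · obtain ⟨i, rfl⟩ : ∃ i, j = i + k := ⟨j - k, by omega⟩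
        rw [hper, ih i (by omega), Nat.add_mod_right]
  refine ⟨m, (Finset.range k).sup' ⟨0, Finset.mem_range.2 hk⟩ (fun i => ‖g i‖), fun j => ?_⟩
  have : ‖g j‖ ≤ (Finset.range k).sup' ⟨0, Finset.mem_range.2 hk⟩ (fun i => ‖g i‖) := by
    rw [hmod j]
    exact Finset.le_sup' (fun i => ‖g i‖) (Finset.mem_range.2 (Nat.mod_lt j hk))
  simpa [hg, hY, hm] using this
end

section
/- Let f̃ : ℝ^b → ℝ^b be an A-equivariant lift and suppose A is expanding with constant λ > 1 for the norm ‖·‖. If for some constant K the orbits (x̃, f̃) and (ỹ, A) shadow with constant K (i.e. ‖f̃^n(x̃) − A^n ỹ‖ ≤ K for all n ∈ ℕ), then they shadow with the uniform constant δ(f) = c(f)/(λ − 1), i.e. ‖f̃^n(x̃) − A^n ỹ‖ ≤ c(f)/(λ − 1) for all n ∈ ℕ. -/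
open Matrix Filter

/-- If the orbits `(x̃, f̃)` and `(ỹ, A)` shadow with some constant `K`, then they
shadow with the uniform constant `δ(f) = c(f)/(λ − 1)`. -/
theorem stmt8 (b : ℕ) (hb : 1 ≤ b) (A : Matrix (Fin b) (Fin b) ℤ)
    (f : (Fin b → ℝ) → (Fin b → ℝ)) (hcont : Continuous f)
    (hequiv : ∀ (x : Fin b → ℝ) (n : Fin b → ℤ),
      f (x + intVec n) = f x + (realMat A).mulVec (intVec n))
    (lam c : ℝ) (hlam : 1 < lam) (hA : (realMat A).det ≠ 0)
    (hexp : ∀ v : Fin b → ℝ, lam * ‖v‖ ≤ ‖(realMat A).mulVec v‖)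
    (hc : ∀ x : Fin b → ℝ, ‖f x - (realMat A).mulVec x‖ ≤ c)
    (x y : Fin b → ℝ) (K : ℝ)
    (hK : ∀ n : ℕ, ‖f^[n] x - (realMat A ^ n).mulVec y‖ ≤ K) :
    ∀ n : ℕ, ‖f^[n] x - (realMat A ^ n).mulVec y‖ ≤ c / (lam - 1) := by
  set M := realMat A with hM
  by_contra h
  push_neg at h
  obtain ⟨n0, hn0⟩ := h
  have hc0 : 0 ≤ c := le_trans (norm_nonneg _) (hc 0)
  have hlam0 : 0 < lam - 1 := by linarith
  set δ := c / (lam - 1) with hδ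
  have hδc : lam * δ - c = δ := by
    have h1 : (lam - 1) * δ = c := by rw [hδ]; field_simp [ne_of_gt hlam0]
    linear_combination h1
  set d : ℕ → ℝ := fun n => ‖f^[n] x - (M ^ n).mulVec y‖ with hd
  have step : ∀ n, lam * d n - c ≤ d (n + 1) := by
    intro n
    have h1 : f^[n+1] x = f (f^[n] x) := Function.iterate_succ_apply' f n x
    have h2 : (M ^ (n+1)).mulVec y = M.mulVec ((M ^ n).mulVec y) := by
      rw [pow_succ', ← Matrix.mulVec_mulVec]
    set u := f^[n] x with hu
    set v := (M ^ n).mulVec y with hv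
    have key : M.mulVec (u - v) = (f u - M.mulVec v) - (f u - M.mulVec u) := by
      rw [Matrix.mulVec_sub]; abel
    have htr : ‖M.mulVec (u - v)‖ ≤ ‖f u - M.mulVec v‖ + ‖f u - M.mulVec u‖ := by
      rw [key]; exact norm_sub_le _ _
    simp only [hd, h1, h2]
    have := hexp (u - v)
    have := hc u
    linarith
  set ε := d n0 - δ with hε
  have hεpos : 0 < ε := by simp only [hε]; linarith [hn0]
  have grow : ∀ k, δ + lam ^ k * ε ≤ d (n0 + k) := by
    intro k
    induction k with
    | zero => rw [pow_zero, one_mul, Nat.add_zero]; linarith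
    | succ k ih =>
      have h1 : lam * (δ + lam ^ k * ε) ≤ lam * d (n0 + k) :=
        mul_le_mul_of_nonneg_left ih (by linarith)
      have h2 := step (n0 + k)
      have h3 : lam * (δ + lam ^ k * ε) - c = δ + lam ^ (k+1) * ε := by
        rw [mul_add, pow_succ]; nlinarith [hδc]
      have : δ + lam ^ (k+1) * ε ≤ d (n0 + k + 1) := by linarith
      rw [Nat.add_succ]; exact this
  obtain ⟨k, hk⟩ := pow_unbounded_of_one_lt ((K - δ)/ε) hlam
  have h4 := grow k
  have h5 : d (n0 + k) ≤ K := hK (n0 + k)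
  have h6 : (K - δ)/ε < lam ^ k := hk
  have h7 : K - δ < lam ^ k * ε := by
    rw [div_lt_iff₀ hεpos] at h6; linarith
  linarith
end

section
/- Let f̃ : ℝ^b → ℝ^b be an A-equivariant lift and suppose A is expanding with constant λ > 1 for the norm ‖·‖. Then for every x̃ ∈ ℝ^b there exists a unique ỹ ∈ ℝ^b such that ‖f̃^i(x̃) − A^i ỹ‖ ≤ δ(f) = c(f)/(λ − 1) for all i ∈ ℕ. -/
open Matrix Filter

theorem stmt9_aux (b : ℕ) (A : Matrix (Fin b) (Fin b) ℝ)
    (f : (Fin b → ℝ) → (Fin b → ℝ))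
    (lam c : ℝ) (hlam : 1 < lam) (hA : A.det ≠ 0)
    (hexp : ∀ v : Fin b → ℝ, lam * ‖v‖ ≤ ‖A.mulVec v‖)
    (hc : ∀ x : Fin b → ℝ, ‖f x - A.mulVec x‖ ≤ c)
    (x : Fin b → ℝ) :
    ∃! y : Fin b → ℝ, ∀ i : ℕ,
      ‖f^[i] x - (A ^ i).mulVec y‖ ≤ c / (lam - 1) := by
  have hcnn : 0 ≤ c := le_trans (norm_nonneg _) (hc x)
  have hlam0 : (0:ℝ) < lam := by linarith
  have hdet : IsUnit A.det := isUnit_iff_ne_zero.mpr hA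
  set B := A⁻¹ with hB
  have hMB : A * B = 1 := Matrix.mul_nonsing_inv A hdet
  have hBM : B * A = 1 := Matrix.nonsing_inv_mul A hdet
  set r : ℝ := lam⁻¹ with hr
  have hr0 : 0 < r := inv_pos.mpr hlam0
  have hr1 : r < 1 := inv_lt_one_of_one_lt₀ hlam
  -- power inverses
  have hMBpow : ∀ k : ℕ, A ^ k * B ^ k = 1 := by
    intro k; induction k with
    | zero => simp
    | succ k ih =>
      rw [pow_succ' A, pow_succ B, mul_assoc, ← mul_assoc (A ^ k), ih, one_mul, hMB]
  have hBle : ∀ v, ‖B.mulVec v‖ ≤ r * ‖v‖ := by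
    intro v
    have h1 := hexp (B.mulVec v)
    rw [Matrix.mulVec_mulVec, hMB, Matrix.one_mulVec] at h1
    rw [hr, ← div_eq_inv_mul, le_div_iff₀ hlam0]
    linarith
  have hBpow : ∀ (k : ℕ) v, ‖(B ^ k).mulVec v‖ ≤ r ^ k * ‖v‖ := by
    intro k; induction k with
    | zero => intro v; simp
    | succ k ih =>
      intro v
      have he : (B ^ (k+1)).mulVec v = (B ^ k).mulVec (B.mulVec v) := by
        rw [Matrix.mulVec_mulVec, ← pow_succ]
      rw [he]
      calc ‖(B ^ k).mulVec (B.mulVec v)‖ ≤ r ^ k * ‖B.mulVec v‖ := ih _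
        _ ≤ r ^ k * (r * ‖v‖) := by
            exact mul_le_mul_of_nonneg_left (hBle v) (by positivity)
        _ = r ^ (k+1) * ‖v‖ := by ring
  set y : ℕ → (Fin b → ℝ) := fun n => (B ^ n).mulVec (f^[n] x) with hy
  have hkey : ∀ n : ℕ, y (n+1) - y n
      = (B ^ (n+1)).mulVec (f^[n+1] x - A.mulVec (f^[n] x)) := by
    intro n
    have h1 : y n = (B ^ (n+1)).mulVec (A.mulVec (f^[n] x)) := by
      rw [hy]
      simp only [Matrix.mulVec_mulVec]
      congr 1
      rw [pow_succ, mul_assoc, hBM, mul_one]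
    rw [h1, hy]
    simp only [Matrix.mulVec_sub]
  have hstep : ∀ n : ℕ, dist (y n) (y (n+1)) ≤ (c * r) * r ^ n := by
    intro n
    rw [dist_eq_norm, ← norm_neg, neg_sub, hkey n]
    calc ‖(B ^ (n+1)).mulVec (f^[n+1] x - A.mulVec (f^[n] x))‖
        ≤ r ^ (n+1) * ‖f^[n+1] x - A.mulVec (f^[n] x)‖ := hBpow _ _
      _ ≤ r ^ (n+1) * c := by
          refine mul_le_mul_of_nonneg_left ?_ (by positivity)
          rw [Function.iterate_succ_apply']
          exact hc _
      _ = (c * r) * r ^ n := by ring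
  have hcauchy : CauchySeq y := cauchySeq_of_le_geometric r (c * r) hr1 hstep
  obtain ⟨yl, hyl⟩ := cauchySeq_tendsto_of_complete hcauchy
  -- continuity of mulVec
  have hmvcont : ∀ M : Matrix (Fin b) (Fin b) ℝ,
      Continuous (fun v : Fin b → ℝ => M.mulVec v) := by
    intro M
    exact (Matrix.mulVecLin M).continuous_of_finiteDimensional
  have hfinal : ∀ i : ℕ, ‖f^[i] x - (A ^ i).mulVec yl‖ ≤ c / (lam - 1) := by
    intro i
    set g : ℕ → (Fin b → ℝ) := fun n => (A ^ i).mulVec (y (n + i)) with hg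
    have hg0 : g 0 = f^[i] x := by
      rw [hg]
      simp only [Nat.zero_add, hy, Matrix.mulVec_mulVec, hMBpow i, Matrix.one_mulVec]
    have hgstep : ∀ n : ℕ, dist (g n) (g (n+1)) ≤ (c * r) * r ^ n := by
      intro n
      rw [dist_eq_norm]
      have h1 : g n - g (n+1) = (A ^ i).mulVec (-(y (n+i+1) - y (n+i))) := by
        simp only [hg]
        have hidx : n + 1 + i = n + i + 1 := by omega
        rw [hidx]
        simp only [Matrix.mulVec_sub, Matrix.mulVec_neg]
        abel
      rw [h1, Matrix.mulVec_neg, norm_neg, hkey (n+i), Matrix.mulVec_mulVec]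
      have h2 : A ^ i * B ^ (n + i + 1) = B ^ (n+1) := by
        rw [show n + i + 1 = i + (n+1) by ring, pow_add, ← mul_assoc, hMBpow i, one_mul]
      rw [h2]
      calc ‖(B ^ (n+1)).mulVec (f^[n+i+1] x - A.mulVec (f^[n+i] x))‖
          ≤ r ^ (n+1) * ‖f^[n+i+1] x - A.mulVec (f^[n+i] x)‖ := hBpow _ _
        _ ≤ r ^ (n+1) * c := by
            refine mul_le_mul_of_nonneg_left ?_ (by positivity)
            rw [Function.iterate_succ_apply']
            exact hc _
        _ = (c * r) * r ^ n := by ring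
    have hgt : Tendsto g atTop (nhds ((A ^ i).mulVec yl)) := by
      apply ((hmvcont (A ^ i)).tendsto yl).comp
      exact hyl.comp (tendsto_add_atTop_nat i)
    have := dist_le_of_le_geometric_of_tendsto₀ r (c * r) hr1 hgstep hgt
    rw [hg0, dist_eq_norm] at this
    calc ‖f^[i] x - (A ^ i).mulVec yl‖ ≤ (c * r) / (1 - r) := this
      _ = c / (lam - 1) := by
          rw [hr]; field_simp
  refine ⟨yl, hfinal, ?_⟩
  intro z hz
  have hMlow : ∀ (i : ℕ) (v : Fin b → ℝ), lam ^ i * ‖v‖ ≤ ‖(A ^ i).mulVec v‖ := by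
    intro i; induction i with
    | zero => intro v; simp
    | succ i ih =>
      intro v
      have he : (A ^ (i+1)).mulVec v = (A ^ i).mulVec (A.mulVec v) := by
        rw [Matrix.mulVec_mulVec, ← pow_succ]
      rw [he]
      calc lam ^ (i+1) * ‖v‖ = lam ^ i * (lam * ‖v‖) := by ring
        _ ≤ lam ^ i * ‖A.mulVec v‖ :=
            mul_le_mul_of_nonneg_left (hexp v) (by positivity)
        _ ≤ ‖(A ^ i).mulVec (A.mulVec v)‖ := ih _
  have hbd : ∀ i : ℕ, lam ^ i * ‖z - yl‖ ≤ 2 * (c / (lam - 1)) := by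
    intro i
    calc lam ^ i * ‖z - yl‖ ≤ ‖(A ^ i).mulVec (z - yl)‖ := hMlow i _
      _ = ‖(f^[i] x - (A ^ i).mulVec yl) - (f^[i] x - (A ^ i).mulVec z)‖ := by
          rw [Matrix.mulVec_sub]; congr 1; abel
      _ ≤ ‖f^[i] x - (A ^ i).mulVec yl‖ + ‖f^[i] x - (A ^ i).mulVec z‖ :=
          norm_sub_le _ _
      _ ≤ c / (lam - 1) + c / (lam - 1) := add_le_add (hfinal i) (hz i)
      _ = 2 * (c / (lam - 1)) := by ring
  by_contra hne
  have hpos : 0 < ‖z - yl‖ := by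
    rw [norm_pos_iff, sub_ne_zero]
    exact fun h => hne (by rw [h])
  obtain ⟨i, hi⟩ := pow_unbounded_of_one_lt (2 * (c / (lam - 1)) / ‖z - yl‖) hlam
  have := hbd i
  rw [div_lt_iff₀ hpos] at hi
  linarith

/-- For every `x̃ ∈ ℝ^b` there is a unique `ỹ ∈ ℝ^b` such that
`‖f̃^i(x̃) − A^i ỹ‖ ≤ δ(f) = c(f)/(λ − 1)` for all `i ∈ ℕ`. -/
theorem stmt9 (b : ℕ) (hb : 1 ≤ b) (A : Matrix (Fin b) (Fin b) ℤ)
    (f : (Fin b → ℝ) → (Fin b → ℝ)) (hcont : Continuous f)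
    (hequiv : ∀ (x : Fin b → ℝ) (n : Fin b → ℤ),
      f (x + intVec n) = f x + (realMat A).mulVec (intVec n))
    (lam c : ℝ) (hlam : 1 < lam) (hA : (realMat A).det ≠ 0)
    (hexp : ∀ v : Fin b → ℝ, lam * ‖v‖ ≤ ‖(realMat A).mulVec v‖)
    (hc : ∀ x : Fin b → ℝ, ‖f x - (realMat A).mulVec x‖ ≤ c)
    (x : Fin b → ℝ) :
    ∃! y : Fin b → ℝ, ∀ i : ℕ,
      ‖f^[i] x - (realMat A ^ i).mulVec y‖ ≤ c / (lam - 1) :=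
  stmt9_aux b (realMat A) f lam c hlam hA hexp hc x
end

section
/- Let f̃ : ℝ^b → ℝ^b be an A-equivariant lift with A expanding with constant λ > 1 for the norm ‖·‖, and assume in addition that f̃ is Lipschitz with constant L > 1. Then for every ν with 0 < ν < min(log λ / log L, 1), the bounded function σ_∞(x̃) = β̃(x̃) − x̃ is ν-Hölder continuous on ℝ^b; that is, there is a constant C with ‖σ_∞(x̃) − σ_∞(ỹ)‖ ≤ C ‖x̃ − ỹ‖^ν for all x̃, ỹ. -/
open Matrix Filter

/-- If in addition `f̃` is Lipschitz with constant `L > 1`, then for every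
`0 < ν < min(log λ / log L, 1)` the bounded function `σ_∞(x̃) = β̃(x̃) − x̃` is ν-Hölder. -/
theorem stmt12 (b : ℕ) (hb : 1 ≤ b) (A : Matrix (Fin b) (Fin b) ℤ)
    (f : (Fin b → ℝ) → (Fin b → ℝ)) (hcont : Continuous f)
    (hequiv : ∀ (x : Fin b → ℝ) (n : Fin b → ℤ),
      f (x + intVec n) = f x + (realMat A).mulVec (intVec n))
    (lam c : ℝ) (hlam : 1 < lam) (hA : (realMat A).det ≠ 0)
    (hexp : ∀ v : Fin b → ℝ, lam * ‖v‖ ≤ ‖(realMat A).mulVec v‖)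
    (hc : ∀ x : Fin b → ℝ, ‖f x - (realMat A).mulVec x‖ ≤ c)
    (L : ℝ) (hL : 1 < L)
    (hLip : ∀ x y : Fin b → ℝ, ‖f x - f y‖ ≤ L * ‖x - y‖)
    (β : (Fin b → ℝ) → (Fin b → ℝ))
    (hβ : ∀ x : Fin b → ℝ, Tendsto (fun n : ℕ => ((realMat A)⁻¹ ^ n).mulVec (f^[n] x))
      atTop (nhds (β x)))
    (ν : ℝ) (hν0 : 0 < ν) (hν : ν < min (Real.log lam / Real.log L) 1) :
    ∃ C : ℝ, ∀ x y : Fin b → ℝ, ‖(β x - x) - (β y - y)‖ ≤ C * ‖x - y‖ ^ ν := by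
  set M : Matrix (Fin b) (Fin b) ℝ := realMat A with hM
  set B : Matrix (Fin b) (Fin b) ℝ := M⁻¹ with hB
  have hlam0 : (0:ℝ) < lam := lt_trans one_pos hlam
  have hlam1 : (0:ℝ) < lam - 1 := by linarith
  have hL0 : (0:ℝ) < L := lt_trans one_pos hL
  have hc0 : (0:ℝ) ≤ c := le_trans (norm_nonneg _) (hc 0)
  have hAunit : IsUnit M.det := isUnit_iff_ne_zero.mpr hA
  have hinv : B * M = 1 := Matrix.nonsing_inv_mul M hAunit
  have hinv' : M * B = 1 := Matrix.mul_nonsing_inv M hAunit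
  have hcontr : ∀ v : Fin b → ℝ, ‖B.mulVec v‖ ≤ lam⁻¹ * ‖v‖ := by
    intro v
    have h1 := hexp (B.mulVec v)
    rw [Matrix.mulVec_mulVec, hinv', Matrix.one_mulVec] at h1
    rw [inv_mul_eq_div, le_div_iff₀ hlam0]
    linarith [h1]
  have hcontrN : ∀ (n : ℕ) (v : Fin b → ℝ), ‖(B^n).mulVec v‖ ≤ lam⁻¹^n * ‖v‖ := by
    intro n
    induction n with
    | zero => intro v; simp
    | succ n ih =>
      intro v
      rw [pow_succ', ← Matrix.mulVec_mulVec]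
      calc ‖B.mulVec ((B^n).mulVec v)‖ ≤ lam⁻¹ * ‖(B^n).mulVec v‖ := hcontr _
        _ ≤ lam⁻¹ * (lam⁻¹^n * ‖v‖) :=
            mul_le_mul_of_nonneg_left (ih v) (by positivity)
        _ = lam⁻¹^(n+1) * ‖v‖ := by ring
  set K : ℝ := c / (lam - 1) with hK
  have hK0 : 0 ≤ K := div_nonneg hc0 hlam1.le
  -- tail estimate
  have htail : ∀ (x : Fin b → ℝ) (N : ℕ),
      ‖β x - (B^N).mulVec (f^[N] x)‖ ≤ K * lam⁻¹^N := by
    intro x N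
    set g : ℕ → (Fin b → ℝ) := fun n => (B^n).mulVec (f^[n] x) with hg
    have hstep : ∀ n, ‖g (n+1) - g n‖ ≤ c * lam⁻¹^(n+1) := by
      intro n
      have hid : g (n+1) - g n = (B^(n+1)).mulVec (f^[n+1] x - M.mulVec (f^[n] x)) := by
        rw [hg]
        simp only
        rw [Matrix.mulVec_sub, Matrix.mulVec_mulVec, pow_succ, mul_assoc, hinv, mul_one]
      rw [hid]
      calc ‖(B^(n+1)).mulVec (f^[n+1] x - M.mulVec (f^[n] x))‖
          ≤ lam⁻¹^(n+1) * ‖f^[n+1] x - M.mulVec (f^[n] x)‖ := hcontrN _ _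
        _ ≤ lam⁻¹^(n+1) * c := by
            apply mul_le_mul_of_nonneg_left _ (by positivity)
            rw [Function.iterate_succ_apply']
            exact hc _
        _ = c * lam⁻¹^(n+1) := mul_comm _ _
    have hclaim : ∀ k, ‖g (N+k) - g N‖ ≤ K * (lam⁻¹^N - lam⁻¹^(N+k)) := by
      intro k
      induction k with
      | zero => simp
      | succ k ih =>
        have hNk : N + (k+1) = (N+k) + 1 := by ring
        calc ‖g (N+(k+1)) - g N‖
            ≤ ‖g (N+(k+1)) - g (N+k)‖ + ‖g (N+k) - g N‖ :=
              norm_sub_le_norm_sub_add_norm_sub _ _ _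
          _ ≤ c * lam⁻¹^((N+k)+1) + K * (lam⁻¹^N - lam⁻¹^(N+k)) := by
              rw [hNk]; exact add_le_add (hstep _) ih
          _ = K * (lam⁻¹^N - lam⁻¹^(N+(k+1))) := by
              rw [hNk, pow_succ, hK]
              field_simp
              ring
    have hlim : Tendsto (fun k : ℕ => g (N + k)) atTop (nhds (β x)) := by
      have h := (hβ x).comp (tendsto_add_atTop_nat N)
      have heq : (fun k : ℕ => g (N + k)) =
          (fun n : ℕ => ((realMat A)⁻¹ ^ n).mulVec (f^[n] x)) ∘ (fun k => k + N) := by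
        funext k
        simp only [hg, Function.comp_apply]
        rw [add_comm N k]
      rw [heq]
      exact h
    have hlim2 : Tendsto (fun k : ℕ => ‖g (N+k) - g N‖) atTop (nhds ‖β x - g N‖) :=
      ((hlim.sub tendsto_const_nhds).norm)
    refine le_of_tendsto' hlim2 (fun k => le_trans (hclaim k) ?_)
    have h0 : 0 ≤ lam⁻¹^(N+k) := by positivity
    nlinarith
  -- Lipschitz iterates
  have hLipN : ∀ (N : ℕ) (x y : Fin b → ℝ), ‖f^[N] x - f^[N] y‖ ≤ L^N * ‖x - y‖ := by
    intro N
    induction N with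
    | zero => intro x y; simp
    | succ N ih =>
      intro x y
      rw [Function.iterate_succ_apply', Function.iterate_succ_apply']
      calc ‖f (f^[N] x) - f (f^[N] y)‖ ≤ L * ‖f^[N] x - f^[N] y‖ := hLip _ _
        _ ≤ L * (L^N * ‖x - y‖) := mul_le_mul_of_nonneg_left (ih x y) hL0.le
        _ = L^(N+1) * ‖x - y‖ := by ring
  -- the constant
  refine ⟨lam * (2*K + 1) + 2*K + 1, ?_⟩
  intro x y
  set d : ℝ := ‖x - y‖ with hd
  have hd0 : 0 ≤ d := norm_nonneg _
  rcases eq_or_lt_of_le hd0 with hdz | hdpos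
  · -- d = 0
    have h0 : ‖x - y‖ = 0 := by rw [← hd]; exact hdz.symm
    have hxy : x = y := sub_eq_zero.mp (norm_eq_zero.mp h0)
    subst hxy
    simp [hd, Real.zero_rpow (ne_of_gt hν0)]
  · -- d > 0
    have hsplit : ‖(β x - x) - (β y - y)‖ ≤ ‖β x - β y‖ + d := by
      have : (β x - x) - (β y - y) = (β x - β y) - (x - y) := by abel
      rw [this]
      exact norm_sub_le _ _
    rcases le_or_gt 1 d with hd1 | hd1
    · -- d ≥ 1
      have hx0 := htail x 0
      have hy0 := htail y 0
      simp only [pow_zero, Matrix.one_mulVec, Function.iterate_zero_apply, mul_one] at hx0 hy0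
      have hdν : 1 ≤ d ^ ν := Real.one_le_rpow hd1 hν0.le
      have hLHS : ‖(β x - x) - (β y - y)‖ ≤ 2*K := by
        calc ‖(β x - x) - (β y - y)‖ ≤ ‖β x - x‖ + ‖β y - y‖ := norm_sub_le _ _
          _ ≤ 2*K := by linarith
      have hCpos : 0 ≤ lam * (2*K + 1) + 1 := by positivity
      nlinarith [hLHS, hdν, hK0]
    · -- 0 < d < 1
      have hlogL : 0 < Real.log L := Real.log_pos hL
      have hloglam : 0 < Real.log lam := Real.log_pos hlam
      set t : ℝ := Real.log lam / Real.log L with ht_def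
      have ht : 0 < t := div_pos hloglam hlogL
      have hνt : ν ≤ t := (lt_of_lt_of_le hν (min_le_left _ _)).le
      have hν1 : ν ≤ 1 := (lt_of_lt_of_le hν (min_le_right _ _)).le
      have hlogd : Real.log d < 0 := Real.log_neg hdpos hd1
      set x0 : ℝ := Real.log d⁻¹ / Real.log L with hx0_def
      set N : ℕ := ⌊x0⌋₊ with hN_def
      have hx0nn : 0 ≤ x0 := by
        apply div_nonneg _ hlogL.le
        rw [Real.log_inv]; linarith
      have hN1 : (N:ℝ) ≤ x0 := Nat.floor_le hx0nn
      have hN2 : x0 < N + 1 := Nat.lt_floor_add_one x0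
      -- est1 : L^N * d ≤ 1
      have est1 : L^N * d ≤ 1 := by
        have h1 : (N:ℝ) * Real.log L ≤ Real.log d⁻¹ := by
          rw [← le_div_iff₀ hlogL]; exact hN1
        have h2 : L^N ≤ d⁻¹ := by
          have e1 : L^N = Real.exp ((N:ℝ) * Real.log L) := by
            rw [← Real.log_pow, Real.exp_log (pow_pos hL0 N)]
          have e2 : d⁻¹ = Real.exp (Real.log d⁻¹) := (Real.exp_log (by positivity)).symm
          rw [e1, e2]
          exact Real.exp_le_exp.mpr h1
        calc L^N * d ≤ d⁻¹ * d := mul_le_mul_of_nonneg_right h2 hd0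
          _ = 1 := inv_mul_cancel₀ (ne_of_gt hdpos)
      -- est2 : lam⁻¹^N ≤ lam * d ^ t
      have est2 : lam⁻¹^N ≤ lam * d ^ t := by
        have h2 : -Real.log d < ((N:ℝ)+1) * Real.log L := by
          have := hN2
          rw [hx0_def, div_lt_iff₀ hlogL, Real.log_inv] at this
          linarith
        have htL : Real.log L * t = Real.log lam := by
          rw [ht_def]; field_simp
        have hh : (-Real.log d) * t ≤ ((N:ℝ)+1) * Real.log lam := by
          have h4 := mul_le_mul_of_nonneg_right h2.le ht.le
          calc (-Real.log d) * t ≤ ((N:ℝ)+1) * Real.log L * t := h4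
            _ = ((N:ℝ)+1) * (Real.log L * t) := by ring
            _ = ((N:ℝ)+1) * Real.log lam := by rw [htL]
        have h3 : -((N:ℝ)) * Real.log lam ≤ Real.log lam + Real.log d * t := by nlinarith
        have e2 : lam⁻¹ ^ N = Real.exp (-((N:ℝ) * Real.log lam)) := by
          rw [inv_pow, ← Real.log_pow, Real.exp_neg, Real.exp_log (pow_pos hlam0 N)]
        have e3 : d ^ t = Real.exp (Real.log d * t) := Real.rpow_def_of_pos hdpos t
        rw [e2, e3]
        calc Real.exp (-((N:ℝ) * Real.log lam))
            ≤ Real.exp (Real.log lam + Real.log d * t) := Real.exp_le_exp.mpr (by linarith)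
          _ = lam * Real.exp (Real.log d * t) := by rw [Real.exp_add, Real.exp_log hlam0]
      have est3 : d ^ t ≤ d ^ ν := Real.rpow_le_rpow_of_exponent_ge hdpos hd1.le hνt
      have est4 : d ≤ d ^ ν := by
        have := Real.rpow_le_rpow_of_exponent_ge hdpos hd1.le hν1
        rwa [Real.rpow_one] at this
      -- main chain
      have hβxy : ‖β x - β y‖ ≤ 2 * K * lam⁻¹^N + lam⁻¹^N * (L^N * d) := by
        have hx := htail x N
        have hy := htail y N
        have hmid : ‖(B^N).mulVec (f^[N] x) - (B^N).mulVec (f^[N] y)‖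
            ≤ lam⁻¹^N * (L^N * d) := by
          rw [← Matrix.mulVec_sub]
          calc ‖(B^N).mulVec (f^[N] x - f^[N] y)‖
              ≤ lam⁻¹^N * ‖f^[N] x - f^[N] y‖ := hcontrN _ _
            _ ≤ lam⁻¹^N * (L^N * d) :=
                mul_le_mul_of_nonneg_left (hLipN N x y) (by positivity)
        calc ‖β x - β y‖
            ≤ ‖β x - (B^N).mulVec (f^[N] x)‖ +
              ‖(B^N).mulVec (f^[N] x) - (B^N).mulVec (f^[N] y)‖ +
              ‖(B^N).mulVec (f^[N] y) - β y‖ := by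
              have h1 := norm_sub_le_norm_sub_add_norm_sub (β x) ((B^N).mulVec (f^[N] x)) (β y)
              have h2 := norm_sub_le_norm_sub_add_norm_sub ((B^N).mulVec (f^[N] x))
                ((B^N).mulVec (f^[N] y)) (β y)
              linarith
          _ ≤ 2 * K * lam⁻¹^N + lam⁻¹^N * (L^N * d) := by
              have hy' : ‖(B^N).mulVec (f^[N] y) - β y‖ ≤ K * lam⁻¹^N := by
                rw [norm_sub_rev]; exact hy
              linarith
      have hinvN0 : (0:ℝ) ≤ lam⁻¹^N := by positivity
      have hinvN : lam⁻¹^N ≤ lam * d ^ ν := le_trans est2 (mul_le_mul_of_nonneg_left est3 hlam0.le)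
      have hmid2 : lam⁻¹^N * (L^N * d) ≤ lam * d ^ ν := by
        calc lam⁻¹^N * (L^N * d) ≤ lam⁻¹^N * 1 := mul_le_mul_of_nonneg_left est1 hinvN0
          _ = lam⁻¹^N := mul_one _
          _ ≤ lam * d ^ ν := hinvN
      have hdν0 : 0 ≤ d ^ ν := Real.rpow_nonneg hd0 ν
      calc ‖(β x - x) - (β y - y)‖ ≤ ‖β x - β y‖ + d := hsplit
        _ ≤ (2 * K * lam⁻¹^N + lam⁻¹^N * (L^N * d)) + d := by linarith
        _ ≤ 2 * K * (lam * d ^ ν) + lam * d ^ ν + d ^ ν := by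
            have h1 : 2 * K * lam⁻¹^N ≤ 2 * K * (lam * d ^ ν) :=
              mul_le_mul_of_nonneg_left hinvN (by linarith)
            linarith [hmid2, est4, h1]
        _ ≤ (lam * (2*K + 1) + 2*K + 1) * d ^ ν := by
            have hexp' : (lam * (2*K + 1) + 2*K + 1) * d ^ ν
                = 2 * K * (lam * d ^ ν) + lam * d ^ ν + (2*K) * d ^ ν + d ^ ν := by ring
            rw [hexp']
            linarith [mul_nonneg hK0 hdν0]
end

section
/- Let f̃ : ℝ^b → ℝ^b be an A-equivariant lift with A expanding with constant λ > 1 for the norm ‖·‖. Then for x̃, ỹ ∈ ℝ^b, the orbits (x̃, f̃) and (ỹ, A) shadow with some constant K (i.e. sup_{n∈ℕ} ‖f̃^n(x̃) − A^n ỹ‖ < ∞) if and only if ỹ = β̃(x̃). In particular, β̃ coincides with the map α̃ that assigns to x̃ the unique point whose A-orbit δ(f)-shadows the f̃-orbit of x̃. -/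
open Matrix Filter

/-- The orbits `(x̃, f̃)` and `(ỹ, A)` shadow with some constant if and only if
`ỹ = β̃(x̃)`; in particular `β̃` coincides with the map `α̃` assigning to `x̃` the unique point
whose `A`-orbit `δ(f)`-shadows the `f̃`-orbit of `x̃`. -/
theorem stmt13 (b : ℕ) (hb : 1 ≤ b) (A : Matrix (Fin b) (Fin b) ℤ)
    (f : (Fin b → ℝ) → (Fin b → ℝ)) (hcont : Continuous f)
    (hequiv : ∀ (x : Fin b → ℝ) (n : Fin b → ℤ),
      f (x + intVec n) = f x + (realMat A).mulVec (intVec n))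
    (lam c : ℝ) (hlam : 1 < lam) (hA : (realMat A).det ≠ 0)
    (hexp : ∀ v : Fin b → ℝ, lam * ‖v‖ ≤ ‖(realMat A).mulVec v‖)
    (hc : ∀ x : Fin b → ℝ, ‖f x - (realMat A).mulVec x‖ ≤ c)
    (β : (Fin b → ℝ) → (Fin b → ℝ))
    (hβ : ∀ x : Fin b → ℝ, Tendsto (fun n : ℕ => ((realMat A)⁻¹ ^ n).mulVec (f^[n] x))
      atTop (nhds (β x))) :
    (∀ x y : Fin b → ℝ,
      (∃ K : ℝ, ∀ n : ℕ, ‖f^[n] x - (realMat A ^ n).mulVec y‖ ≤ K) ↔ y = β x) ∧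
    (∀ α : (Fin b → ℝ) → (Fin b → ℝ),
      (∀ (x : Fin b → ℝ) (i : ℕ),
        ‖f^[i] x - (realMat A ^ i).mulVec (α x)‖ ≤ c / (lam - 1)) → α = β) := by

  classical
  have hA' : IsUnit (realMat A).det := isUnit_iff_ne_zero.mpr hA
  set M := realMat A with hM
  have hMinv : M⁻¹ * M = 1 := Matrix.nonsing_inv_mul M hA'
  have hinvM : M * M⁻¹ = 1 := Matrix.mul_nonsing_inv M hA'
  have hlam0 : (0:ℝ) < lam := lt_trans one_pos hlam
  set r := lam⁻¹ with hr
  have hr0 : 0 < r := inv_pos.mpr hlam0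
  have hr1 : r < 1 := by
    rw [hr]
    exact inv_lt_one_of_one_lt₀ hlam
  have hc0 : 0 ≤ c := le_trans (norm_nonneg _) (hc 0)
  -- contraction of the inverse
  have hinv1 : ∀ v : Fin b → ℝ, ‖(M⁻¹).mulVec v‖ ≤ r * ‖v‖ := by
    intro v
    have h := hexp ((M⁻¹).mulVec v)
    rw [Matrix.mulVec_mulVec, hinvM, Matrix.one_mulVec] at h
    have := mul_le_mul_of_nonneg_left h hr0.le
    calc ‖(M⁻¹).mulVec v‖ = r * (lam * ‖(M⁻¹).mulVec v‖) := by
          rw [hr]; field_simp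
      _ ≤ r * ‖v‖ := by exact mul_le_mul_of_nonneg_left h hr0.le
  have hinvn : ∀ (n : ℕ) (v : Fin b → ℝ), ‖((M⁻¹) ^ n).mulVec v‖ ≤ r ^ n * ‖v‖ := by
    intro n
    induction n with
    | zero => intro v; simp
    | succ n ih =>
      intro v
      have : ((M⁻¹) ^ (n+1)).mulVec v = ((M⁻¹) ^ n).mulVec ((M⁻¹).mulVec v) := by
        rw [Matrix.mulVec_mulVec, ← pow_succ]
      rw [this]
      calc ‖((M⁻¹) ^ n).mulVec ((M⁻¹).mulVec v)‖ ≤ r ^ n * ‖(M⁻¹).mulVec v‖ := ih _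
        _ ≤ r ^ n * (r * ‖v‖) := by
            exact mul_le_mul_of_nonneg_left (hinv1 v) (pow_nonneg hr0.le n)
        _ = r ^ (n+1) * ‖v‖ := by ring
  have hcancel : ∀ n : ℕ, (M⁻¹) ^ n * M ^ n = 1 := by
    intro n
    induction n with
    | zero => simp
    | succ n ih =>
      calc (M⁻¹) ^ (n+1) * M ^ (n+1) = (M⁻¹) ^ n * ((M⁻¹ * M) * M ^ n) := by
            rw [pow_succ, pow_succ']; noncomm_ring
        _ = 1 := by rw [hMinv, one_mul, ih]
  -- the approximating sequence
  set a : (Fin b → ℝ) → ℕ → (Fin b → ℝ) := fun z n => ((M⁻¹) ^ n).mulVec (f^[n] z) with ha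
  have ha0 : ∀ z, a z 0 = z := by intro z; simp [ha]
  have hstep : ∀ (z : Fin b → ℝ) (n : ℕ), dist (a z n) (a z (n+1)) ≤ (c * r) * r ^ n := by
    intro z n
    have hmat : (M⁻¹) ^ (n+1) * M = (M⁻¹) ^ n :=
      calc (M⁻¹) ^ (n+1) * M = (M⁻¹) ^ n * (M⁻¹ * M) := by rw [pow_succ]; noncomm_ring
        _ = (M⁻¹) ^ n := by rw [hMinv, mul_one]
    have key : a z n - a z (n+1) = ((M⁻¹) ^ (n+1)).mulVec (M.mulVec (f^[n] z) - f^[n+1] z) := by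
      show ((M⁻¹) ^ n).mulVec (f^[n] z) - ((M⁻¹) ^ (n+1)).mulVec (f^[n+1] z) = _
      rw [Matrix.mulVec_sub, Matrix.mulVec_mulVec, hmat]
    rw [dist_eq_norm, key]
    calc ‖((M⁻¹) ^ (n+1)).mulVec (M.mulVec (f^[n] z) - f^[n+1] z)‖
        ≤ r ^ (n+1) * ‖M.mulVec (f^[n] z) - f^[n+1] z‖ := hinvn _ _
      _ ≤ r ^ (n+1) * c := by
          refine mul_le_mul_of_nonneg_left ?_ (pow_nonneg hr0.le _)
          rw [← norm_neg, neg_sub, Function.iterate_succ_apply']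
          exact hc (f^[n] z)
      _ = (c * r) * r ^ n := by ring
  have hclose : ∀ z : Fin b → ℝ, ‖z - β z‖ ≤ c / (lam - 1) := by
    intro z
    have hd : dist (a z 0) (β z) ≤ (c * r) / (1 - r) :=
      dist_le_of_le_geometric_of_tendsto₀ r (c * r) hr1 (hstep z) (hβ z)
    rw [ha0, dist_eq_norm] at hd
    have : (c * r) / (1 - r) = c / (lam - 1) := by
      rw [hr]; field_simp
    rwa [this] at hd
  -- continuity of mulVec
  have hMcont : Continuous (fun v : Fin b → ℝ => M.mulVec v) := by
    have := (Matrix.mulVecLin M).continuous_of_finiteDimensional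
    exact this
  -- semiconjugacy
  have hsemi : ∀ z : Fin b → ℝ, β (f z) = M.mulVec (β z) := by
    intro z
    have t1 : Tendsto (fun n : ℕ => a (f z) n) atTop (nhds (β (f z))) := hβ (f z)
    have t2 : Tendsto (fun n : ℕ => a z (n+1)) atTop (nhds (β z)) :=
      (hβ z).comp (tendsto_add_atTop_nat 1)
    have t3 : Tendsto (fun n : ℕ => M.mulVec (a z (n+1))) atTop (nhds (M.mulVec (β z))) :=
      (hMcont.tendsto _).comp t2
    have heq : (fun n : ℕ => a (f z) n) = fun n : ℕ => M.mulVec (a z (n+1)) := by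
      funext n
      have hmat2 : M * (M⁻¹) ^ (n+1) = (M⁻¹) ^ n :=
        calc M * (M⁻¹) ^ (n+1) = (M * M⁻¹) * (M⁻¹) ^ n := by rw [pow_succ']; noncomm_ring
          _ = (M⁻¹) ^ n := by rw [hinvM, one_mul]
      show ((M⁻¹) ^ n).mulVec (f^[n] (f z)) = M.mulVec (((M⁻¹) ^ (n+1)).mulVec (f^[n+1] z))
      rw [Matrix.mulVec_mulVec, hmat2, ← Function.iterate_succ_apply]
    rw [heq] at t1
    exact tendsto_nhds_unique t1 t3
  have hiter : ∀ (z : Fin b → ℝ) (n : ℕ), β (f^[n] z) = (M ^ n).mulVec (β z) := by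
    intro z n
    induction n with
    | zero => simp
    | succ n ih =>
      rw [Function.iterate_succ_apply', hsemi, ih, Matrix.mulVec_mulVec, ← pow_succ']
  have hmain : ∀ (x : Fin b → ℝ) (n : ℕ), ‖f^[n] x - (M ^ n).mulVec (β x)‖ ≤ c / (lam - 1) := by
    intro x n
    rw [← hiter]
    exact hclose (f^[n] x)
  have hiff : ∀ x y : Fin b → ℝ,
      (∃ K : ℝ, ∀ n : ℕ, ‖f^[n] x - (M ^ n).mulVec y‖ ≤ K) ↔ y = β x := by
    intro x y
    constructor
    · rintro ⟨K, hK⟩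
      have hK0 : 0 ≤ K := le_trans (norm_nonneg _) (hK 0)
      have hbound : ∀ n : ℕ, ‖a x n - y‖ ≤ K * r ^ n := by
        intro n
        have : a x n - y = ((M⁻¹) ^ n).mulVec (f^[n] x - (M ^ n).mulVec y) := by
          rw [Matrix.mulVec_sub, Matrix.mulVec_mulVec, hcancel, Matrix.one_mulVec]
        rw [this]
        calc ‖((M⁻¹) ^ n).mulVec (f^[n] x - (M ^ n).mulVec y)‖
            ≤ r ^ n * ‖f^[n] x - (M ^ n).mulVec y‖ := hinvn _ _
          _ ≤ r ^ n * K := mul_le_mul_of_nonneg_left (hK n) (pow_nonneg hr0.le n)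
          _ = K * r ^ n := by ring
      have hzero : Tendsto (fun n : ℕ => ‖a x n - y‖) atTop (nhds 0) := by
        have h0 : Tendsto (fun n : ℕ => K * r ^ n) atTop (nhds 0) := by
          have := tendsto_pow_atTop_nhds_zero_of_lt_one hr0.le hr1
          simpa using this.const_mul K
        exact squeeze_zero (fun n => norm_nonneg _) hbound h0
      have hty : Tendsto (fun n : ℕ => a x n) atTop (nhds y) :=
        tendsto_iff_norm_sub_tendsto_zero.mpr hzero
      exact tendsto_nhds_unique hty (hβ x)
    · rintro rfl
      exact ⟨c / (lam - 1), hmain x⟩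
  refine ⟨hiff, ?_⟩
  intro α hα
  funext x
  exact (hiff x (α x)).mp ⟨c / (lam - 1), fun n => hα x n⟩
end

section
/- Let f̃ : ℝ^b → ℝ^b be an A-equivariant lift with A expanding with constant λ > 1 for the norm ‖·‖. For x̃ ∈ ℝ^b let ⌊x̃⌋ ∈ ℤ^b denote the componentwise floor and set d_k(x̃) = ⌊f̃^k(x̃)⌋ − ⌊x̃⌋ ∈ ℤ^b. Then (A^k − I)^{-1} d_k(x̃) → β̃(x̃) as k → ∞, for every x̃ ∈ ℝ^b. -/
open Matrix Filter

/-- With `d_k(x̃) = ⌊f̃^k(x̃)⌋ − ⌊x̃⌋` (componentwise floor), one has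
`(A^k − I)⁻¹ d_k(x̃) → β̃(x̃)` as `k → ∞`. -/
theorem stmt14 (b : ℕ) (hb : 1 ≤ b) (A : Matrix (Fin b) (Fin b) ℤ)
    (f : (Fin b → ℝ) → (Fin b → ℝ)) (hcont : Continuous f)
    (hequiv : ∀ (x : Fin b → ℝ) (n : Fin b → ℤ),
      f (x + intVec n) = f x + (realMat A).mulVec (intVec n))
    (lam : ℝ) (hlam : 1 < lam) (hA : (realMat A).det ≠ 0)
    (hexp : ∀ v : Fin b → ℝ, lam * ‖v‖ ≤ ‖(realMat A).mulVec v‖)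
    (β : (Fin b → ℝ) → (Fin b → ℝ))
    (hβ : ∀ x : Fin b → ℝ, Tendsto (fun n : ℕ => ((realMat A)⁻¹ ^ n).mulVec (f^[n] x))
      atTop (nhds (β x)))
    (x : Fin b → ℝ) :
    Tendsto (fun k : ℕ =>
        (realMat A ^ k - 1)⁻¹.mulVec (intVec (fun i => ⌊f^[k] x i⌋ - ⌊x i⌋)))
      atTop (nhds (β x)) := by
  set M := realMat A with hM
  have hdet : IsUnit M.det := isUnit_iff_ne_zero.mpr hA
  have hlam0 : (0:ℝ) < lam := lt_trans one_pos hlam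
  set r : ℝ := lam⁻¹ with hr
  have hr0 : 0 < r := inv_pos.mpr hlam0
  have hr1 : r < 1 := inv_lt_one_of_one_lt₀ hlam
  -- bound on M⁻¹
  have hMinv : ∀ w : Fin b → ℝ, ‖M⁻¹.mulVec w‖ ≤ r * ‖w‖ := by
    intro w
    have h1 : M.mulVec (M⁻¹.mulVec w) = w := by
      rw [Matrix.mulVec_mulVec, Matrix.mul_nonsing_inv _ hdet, Matrix.one_mulVec]
    have h2 := hexp (M⁻¹.mulVec w)
    rw [h1] at h2
    rw [hr, ← div_eq_inv_mul, le_div_iff₀ hlam0, mul_comm]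
    exact h2
  have hN : ∀ (k : ℕ) (w : Fin b → ℝ), ‖(M⁻¹ ^ k).mulVec w‖ ≤ r ^ k * ‖w‖ := by
    intro k
    induction k with
    | zero => intro w; simp [Matrix.one_mulVec]
    | succ k ih =>
      intro w
      have he : (M⁻¹ ^ (k+1)).mulVec w = (M⁻¹ ^ k).mulVec (M⁻¹.mulVec w) := by
        rw [Matrix.mulVec_mulVec, ← pow_succ]
      rw [he]
      calc ‖(M⁻¹ ^ k).mulVec (M⁻¹.mulVec w)‖ ≤ r ^ k * ‖M⁻¹.mulVec w‖ := ih _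
        _ ≤ r ^ k * (r * ‖w‖) :=
            mul_le_mul_of_nonneg_left (hMinv w) (pow_nonneg hr0.le k)
        _ = r ^ (k+1) * ‖w‖ := by ring
  -- g k := A^{-k} f^k x
  set g : ℕ → (Fin b → ℝ) := fun k => (M⁻¹ ^ k).mulVec (f^[k] x) with hg
  obtain ⟨B, hB⟩ : ∃ B : ℝ, ∀ k, ‖g k‖ ≤ B := by
    obtain ⟨B, hB⟩ := ((hβ x).norm).bddAbove_range
    exact ⟨B, fun k => hB ⟨k, rfl⟩⟩
  have hB0 : 0 ≤ B := le_trans (norm_nonneg _) (hB 0)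
  -- the bounded vector w_k
  set w : ℕ → (Fin b → ℝ) :=
    fun k i => Int.fract (f^[k] x i) - Int.fract (x i) + x i with hw
  have hwb : ∀ k, ‖w k‖ ≤ 2 + ‖x‖ := by
    intro k
    have h0 : (0:ℝ) ≤ 2 + ‖x‖ := by positivity
    rw [pi_norm_le_iff_of_nonneg h0]
    intro i
    have h1 : |Int.fract (f^[k] x i)| ≤ 1 := by
      rw [abs_of_nonneg (Int.fract_nonneg _)]; exact (Int.fract_lt_one _).le
    have h2 : |Int.fract (x i)| ≤ 1 := by
      rw [abs_of_nonneg (Int.fract_nonneg _)]; exact (Int.fract_lt_one _).le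
    have h3 : |x i| ≤ ‖x‖ := by simpa using norm_le_pi_norm x i
    calc ‖w k i‖ = |Int.fract (f^[k] x i) - Int.fract (x i) + x i| := rfl
      _ ≤ |Int.fract (f^[k] x i) - Int.fract (x i)| + |x i| := abs_add_le _ _
      _ ≤ (|Int.fract (f^[k] x i)| + |Int.fract (x i)|) + |x i| :=
          add_le_add_left (abs_sub _ _) _
      _ ≤ (1 + 1) + ‖x‖ := by gcongr
      _ = 2 + ‖x‖ := by ring
  -- d_k as real vector
  have hd : ∀ k, intVec (fun i => ⌊f^[k] x i⌋ - ⌊x i⌋) = f^[k] x - w k := by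
    intro k
    funext i
    simp only [intVec, hw, Pi.sub_apply]
    push_cast
    rw [← Int.self_sub_fract (f^[k] x i), ← Int.self_sub_fract (x i)]
    ring
  -- main difference estimate, eventually
  set LHS : ℕ → (Fin b → ℝ) :=
    fun k => (M ^ k - 1)⁻¹.mulVec (intVec (fun i => ⌊f^[k] x i⌋ - ⌊x i⌋)) with hLHS
  have hrk : Tendsto (fun k : ℕ => r ^ k) atTop (nhds 0) :=
    tendsto_pow_atTop_nhds_zero_of_lt_one hr0.le hr1
  have key : ∀ᶠ k in atTop, ‖LHS k - g k‖ ≤ (2 * B + 2 * (2 + ‖x‖)) * r ^ k := by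
    filter_upwards [hrk.eventually_le_const (by norm_num : (0:ℝ) < 1/2)] with k hk
    -- setup for this k
    set N : Matrix (Fin b) (Fin b) ℝ := M⁻¹ ^ k with hNdef
    set S : Matrix (Fin b) (Fin b) ℝ := 1 - N with hSdef
    have hSunit : IsUnit S := by
      rw [← Matrix.mulVec_injective_iff_isUnit]
      have hinj : Function.Injective S.mulVecLin := by
        rw [← LinearMap.ker_eq_bot, LinearMap.ker_eq_bot']
        intro v hv
        simp only [Matrix.mulVecLin_apply, hSdef, Matrix.sub_mulVec,
          Matrix.one_mulVec, sub_eq_zero] at hv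
        by_contra hv0
        have h1 : ‖v‖ ≤ r ^ k * ‖v‖ := by
          nth_rewrite 1 [hv]; exact hN k v
        have h2 : r ^ k * ‖v‖ < 1 * ‖v‖ := by
          apply mul_lt_mul_of_pos_right _ (norm_pos_iff.mpr hv0)
          linarith
        linarith
      exact hinj
    have hSdet : IsUnit S.det := (Matrix.isUnit_iff_isUnit_det S).mp hSunit
    set T : Matrix (Fin b) (Fin b) ℝ := S⁻¹ with hTdef
    have hST : S * T = 1 := Matrix.mul_nonsing_inv _ hSdet
    have hTS : T * S = 1 := Matrix.nonsing_inv_mul _ hSdet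
    have hTid : T = 1 + N * T := by
      have h : T - N * T = 1 := by
        calc T - N * T = (1 - N) * T := by rw [sub_mul, one_mul]
          _ = 1 := hST
      calc T = (T - N * T) + N * T := by abel
        _ = 1 + N * T := by rw [h]
    -- bound on T
    have hT : ∀ v : Fin b → ℝ, ‖T.mulVec v‖ ≤ 2 * ‖v‖ := by
      intro v
      have h1 : T.mulVec v = v + N.mulVec (T.mulVec v) := by
        nth_rewrite 1 [hTid]
        rw [Matrix.add_mulVec, Matrix.one_mulVec, ← Matrix.mulVec_mulVec]
      have h2 : ‖T.mulVec v‖ ≤ ‖v‖ + ‖N.mulVec (T.mulVec v)‖ := by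
        nth_rewrite 1 [h1]; exact norm_add_le _ _
      have h3 : ‖N.mulVec (T.mulVec v)‖ ≤ r ^ k * ‖T.mulVec v‖ := hN k _
      have h4 : r ^ k * ‖T.mulVec v‖ ≤ (1/2) * ‖T.mulVec v‖ :=
        mul_le_mul_of_nonneg_right hk (norm_nonneg _)
      linarith
    -- inverse formula
    have hNM : N * M ^ k = 1 := by
      rw [hNdef, Matrix.inv_pow']
      exact Matrix.nonsing_inv_mul _ (by rw [Matrix.det_pow]; exact hdet.pow k)
    have hinv : (M ^ k - 1)⁻¹ = T * N := by
      apply Matrix.inv_eq_left_inv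
      calc (T * N) * (M ^ k - 1) = T * (N * M ^ k) - T * N := by
            rw [mul_sub, mul_one, mul_assoc]
        _ = T * S := by rw [hNM, hSdef, mul_sub, mul_one]
        _ = 1 := hTS
    -- compute the difference
    have egk : N.mulVec (f^[k] x) = g k := rfl
    have e1 : LHS k = T.mulVec (N.mulVec (f^[k] x)) - T.mulVec (N.mulVec (w k)) := by
      show (M ^ k - 1)⁻¹.mulVec (intVec (fun i => ⌊f^[k] x i⌋ - ⌊x i⌋)) = _
      rw [hd k, hinv, Matrix.mulVec_sub, ← Matrix.mulVec_mulVec, ← Matrix.mulVec_mulVec]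
    have e2 : T.mulVec (g k) = g k + N.mulVec (T.mulVec (g k)) := by
      conv_lhs => rw [hTid]
      rw [Matrix.add_mulVec, Matrix.one_mulVec, ← Matrix.mulVec_mulVec]
    have hdiff : LHS k - g k = N.mulVec (T.mulVec (g k)) - T.mulVec (N.mulVec (w k)) := by
      rw [e1, egk]
      nth_rewrite 1 [e2]
      abel
    -- bounds
    have hTg : ‖T.mulVec (g k)‖ ≤ 2 * B := le_trans (hT _) (by have := hB k; linarith)
    have b1 : ‖N.mulVec (T.mulVec (g k))‖ ≤ r ^ k * (2 * B) :=
      le_trans (hN k _) (mul_le_mul_of_nonneg_left hTg (pow_nonneg hr0.le k))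
    have hNw : ‖N.mulVec (w k)‖ ≤ r ^ k * (2 + ‖x‖) :=
      le_trans (hN k _) (mul_le_mul_of_nonneg_left (hwb k) (pow_nonneg hr0.le k))
    have b2 : ‖T.mulVec (N.mulVec (w k))‖ ≤ 2 * (r ^ k * (2 + ‖x‖)) := by
      refine le_trans (hT _) ?_
      linarith
    calc ‖LHS k - g k‖
        = ‖N.mulVec (T.mulVec (g k)) - T.mulVec (N.mulVec (w k))‖ := by rw [hdiff]
      _ ≤ ‖N.mulVec (T.mulVec (g k))‖ + ‖T.mulVec (N.mulVec (w k))‖ := norm_sub_le _ _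
      _ ≤ r ^ k * (2 * B) + 2 * (r ^ k * (2 + ‖x‖)) := add_le_add b1 b2
      _ = (2 * B + 2 * (2 + ‖x‖)) * r ^ k := by ring
  -- conclude
  have hzero : Tendsto (fun k => LHS k - g k) atTop (nhds 0) := by
    rw [tendsto_zero_iff_norm_tendsto_zero]
    apply squeeze_zero' (Eventually.of_forall fun k => norm_nonneg _) key
    simpa using hrk.const_mul (2 * B + 2 * (2 + ‖x‖))
  have hfin := (hβ x).add hzero
  simp only [add_zero] at hfin
  have heq : (fun k => g k + (LHS k - g k)) = LHS := by
    funext k; abel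
  rw [heq] at hfin
  exact hfin
end

section
/- Let f̃ : ℝ^b → ℝ^b be an A-equivariant lift, let μ ∈ ℝ with |μ| > 1, and let v ∈ ℝ^b be a nonzero vector with Aᵀ v = μ v (equivalently ⟨v, A w⟩ = μ ⟨v, w⟩ for all w). Then for every x̃ ∈ ℝ^b the limit β_μ(x̃) = lim_{n→∞} μ^{−n} ⟨v, f̃^n(x̃)⟩ exists; the function β_μ : ℝ^b → ℝ is continuous, satisfies β_μ ∘ f̃ = μ β_μ and β_μ(x̃ + n) = β_μ(x̃) + ⟨v, n⟩ for all n ∈ ℤ^b, and differs from x̃ ↦ ⟨v, x̃⟩ by a bounded function. Moreover β_μ is the unique continuous function g : ℝ^b → ℝ with g ∘ f̃ = μ g such that g(x̃) − ⟨v, x̃⟩ is bounded. -/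
open Matrix Filter

/-- For a real eigenvalue `μ` of `Aᵀ` with `|μ| > 1` and eigenvector `v`, the
limit `β_μ(x̃) = lim μ^{−n} ⟨v, f̃^n(x̃)⟩` exists; `β_μ` is continuous, satisfies
`β_μ ∘ f̃ = μ β_μ` and `β_μ(x̃ + n) = β_μ(x̃) + ⟨v, n⟩`, differs from `x̃ ↦ ⟨v, x̃⟩` by a
bounded function, and is the unique continuous function with these last two properties. -/
theorem stmt15 (b : ℕ) (hb : 1 ≤ b) (A : Matrix (Fin b) (Fin b) ℤ)
    (f : (Fin b → ℝ) → (Fin b → ℝ)) (hcont : Continuous f)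
    (hequiv : ∀ (x : Fin b → ℝ) (n : Fin b → ℤ),
      f (x + intVec n) = f x + (realMat A).mulVec (intVec n))
    (μ : ℝ) (hμ : 1 < |μ|) (v : Fin b → ℝ) (hv : v ≠ 0)
    (heig : (realMat A)ᵀ.mulVec v = μ • v) :
    ∃ g : (Fin b → ℝ) → ℝ,
      (∀ x : Fin b → ℝ,
        Tendsto (fun n : ℕ => (v ⬝ᵥ f^[n] x) / μ ^ n) atTop (nhds (g x))) ∧
      Continuous g ∧
      (∀ x : Fin b → ℝ, g (f x) = μ * g x) ∧
      (∀ (x : Fin b → ℝ) (n : Fin b → ℤ), g (x + intVec n) = g x + v ⬝ᵥ intVec n) ∧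
      (∃ C : ℝ, ∀ x : Fin b → ℝ, |g x - v ⬝ᵥ x| ≤ C) ∧
      (∀ g' : (Fin b → ℝ) → ℝ, Continuous g' → (∀ x, g' (f x) = μ * g' x) →
        (∃ C' : ℝ, ∀ x : Fin b → ℝ, |g' x - v ⬝ᵥ x| ≤ C') → g' = g) := by
  classical
  have habs : (0:ℝ) < |μ| := lt_trans one_pos hμ
  have hμ0 : μ ≠ 0 := fun h => by simp [h] at habs
  have hinv : |μ|⁻¹ < 1 := by
    rw [inv_lt_one_iff₀]; right; exact hμ
  have hinv0 : (0:ℝ) ≤ |μ|⁻¹ := by positivity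
  -- continuity of dot product with v
  have hdotc : Continuous fun x : Fin b → ℝ => v ⬝ᵥ x := by
    simp only [dotProduct]
    exact continuous_finset_sum _ fun i _ => continuous_const.mul (continuous_apply i)
  -- eigen property of dot product
  have key : ∀ w : Fin b → ℝ, v ⬝ᵥ (realMat A) *ᵥ w = μ * (v ⬝ᵥ w) := by
    intro w
    rw [Matrix.dotProduct_mulVec, ← Matrix.mulVec_transpose, heig, smul_dotProduct,
      smul_eq_mul]
  -- cast lemma
  have castVec : ∀ m : Fin b → ℤ, (realMat A) *ᵥ intVec m = intVec (A *ᵥ m) := by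
    intro m; funext i
    simp only [Matrix.mulVec, dotProduct, realMat, Matrix.map_apply, intVec]
    push_cast
    ring
  set r : (Fin b → ℝ) → ℝ := fun x => v ⬝ᵥ f x - μ * (v ⬝ᵥ x) with hr
  have rcont : Continuous r := (hdotc.comp hcont).sub (continuous_const.mul hdotc)
  have rper : ∀ (x : Fin b → ℝ) (m : Fin b → ℤ), r (x + intVec m) = r x := by
    intro x m
    simp only [hr, hequiv, dotProduct_add, key]
    ring
  -- bound on r
  obtain ⟨M, hM⟩ : ∃ M, ∀ x, |r x| ≤ M := by
    obtain ⟨M, hM⟩ :=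
      (isCompact_Icc (a := (0 : Fin b → ℝ)) (b := 1)).exists_bound_of_continuousOn
        rcont.continuousOn
    refine ⟨M, fun x => ?_⟩
    set m : Fin b → ℤ := fun i => ⌊x i⌋ with hm
    have hx : x - intVec m ∈ Set.Icc (0 : Fin b → ℝ) 1 := by
      constructor <;> intro i <;>
        simp only [intVec, hm, Pi.sub_apply, Pi.zero_apply, Pi.one_apply]
      · linarith [Int.floor_le (x i)]
      · linarith [Int.lt_floor_add_one (x i)]
    have h1 : r x = r (x - intVec m) := by
      conv_lhs => rw [show x = (x - intVec m) + intVec m by abel]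
      rw [rper]
    rw [h1, ← Real.norm_eq_abs]
    exact hM _ hx
  have hM0 : 0 ≤ M := le_trans (abs_nonneg _) (hM 0)
  -- summable bound
  set u : ℕ → ℝ := fun k => M * (|μ|⁻¹) ^ (k + 1) with hu_def
  have hu : Summable u := by
    have := (summable_geometric_of_lt_one hinv0 hinv).mul_left (M * |μ|⁻¹)
    refine this.congr fun k => ?_
    simp only [hu_def, pow_succ']
    ring
  have hbound : ∀ (x : Fin b → ℝ) (k : ℕ), ‖r (f^[k] x) / μ ^ (k + 1)‖ ≤ u k := by
    intro x k
    rw [norm_div, Real.norm_eq_abs, Real.norm_eq_abs, abs_pow]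
    show _ ≤ M * |μ|⁻¹ ^ (k + 1)
    rw [inv_pow, ← div_eq_mul_inv]
    gcongr
    exact hM _
  have hsum : ∀ x : Fin b → ℝ, Summable fun k => r (f^[k] x) / μ ^ (k + 1) := fun x =>
    hu.of_norm_bounded (hbound x)
  set g : (Fin b → ℝ) → ℝ := fun x => v ⬝ᵥ x + ∑' k, r (f^[k] x) / μ ^ (k + 1) with hg
  -- partial sums
  have part : ∀ (x : Fin b → ℝ) (n : ℕ),
      v ⬝ᵥ f^[n] x / μ ^ n = v ⬝ᵥ x + ∑ k ∈ Finset.range n, r (f^[k] x) / μ ^ (k + 1) := by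
    intro x n
    induction n with
    | zero => simp
    | succ n ih =>
      rw [Function.iterate_succ_apply', Finset.sum_range_succ, ← add_assoc, ← ih]
      have h2 : v ⬝ᵥ f (f^[n] x) = μ * (v ⬝ᵥ f^[n] x) + r (f^[n] x) := by
        simp only [hr]; ring
      rw [h2]
      field_simp
      ring
  have htend : ∀ x : Fin b → ℝ,
      Tendsto (fun n : ℕ => v ⬝ᵥ f^[n] x / μ ^ n) atTop (nhds (g x)) := by
    intro x
    have h1 := (hsum x).hasSum.tendsto_sum_nat
    have h2 := (tendsto_const_nhds (x := v ⬝ᵥ x) (f := atTop)).add h1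
    exact h2.congr fun n => (part x n).symm
  have gcont : Continuous g := by
    refine hdotc.add (continuous_tsum (fun k => ?_) hu fun k x => hbound x k)
    exact (rcont.comp (hcont.iterate k)).div_const _
  -- functional equation
  have hfeq : ∀ x : Fin b → ℝ, g (f x) = μ * g x := by
    intro x
    refine tendsto_nhds_unique (htend (f x)) ?_
    have h3 := (htend x).comp (tendsto_add_atTop_nat 1)
    have h4 := h3.const_mul μ
    refine h4.congr fun n => ?_
    show μ * (v ⬝ᵥ f^[n + 1] x / μ ^ (n + 1)) = v ⬝ᵥ f^[n] (f x) / μ ^ n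
    rw [← Function.iterate_succ_apply]
    field_simp
    ring
  -- lattice equation
  have castPow : ∀ (k : ℕ) (m : Fin b → ℤ),
      v ⬝ᵥ intVec (A ^ k *ᵥ m) = μ ^ k * (v ⬝ᵥ intVec m) := by
    intro k
    induction k with
    | zero => intro m; simp [Matrix.one_mulVec]
    | succ k ih =>
      intro m
      have : A ^ (k + 1) *ᵥ m = A ^ k *ᵥ (A *ᵥ m) := by
        rw [Matrix.mulVec_mulVec, ← pow_succ]
      rw [this, ih, ← castVec, key]
      ring
  have hiter : ∀ (k : ℕ) (x : Fin b → ℝ) (m : Fin b → ℤ),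
      f^[k] (x + intVec m) = f^[k] x + intVec (A ^ k *ᵥ m) := by
    intro k
    induction k with
    | zero => intro x m; simp [Matrix.one_mulVec]
    | succ k ih =>
      intro x m
      rw [Function.iterate_succ_apply', ih, hequiv, Function.iterate_succ_apply', castVec,
        Matrix.mulVec_mulVec, ← pow_succ']
  have hlat : ∀ (x : Fin b → ℝ) (m : Fin b → ℤ), g (x + intVec m) = g x + v ⬝ᵥ intVec m := by
    intro x m
    refine tendsto_nhds_unique (htend (x + intVec m)) ?_
    have h1 := (htend x).add (tendsto_const_nhds (x := v ⬝ᵥ intVec m) (f := atTop))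
    refine h1.congr fun n => ?_
    rw [hiter, dotProduct_add, castPow]
    field_simp
  -- boundedness
  have hC : ∀ x : Fin b → ℝ, |g x - v ⬝ᵥ x| ≤ ∑' k, u k := by
    intro x
    have h1 : g x - v ⬝ᵥ x = ∑' k, r (f^[k] x) / μ ^ (k + 1) := by simp [hg]
    rw [h1, ← Real.norm_eq_abs]
    exact tsum_of_norm_bounded hu.hasSum (hbound x)
  refine ⟨g, htend, gcont, hfeq, hlat, ⟨∑' k, u k, hC⟩, ?_⟩
  -- uniqueness
  rintro g' hg'c hg'f ⟨C', hC'⟩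
  funext x
  have hD : ∀ y, |g' y - g y| ≤ C' + ∑' k, u k := by
    intro y
    have h1 := hC' y
    have h2 := hC y
    calc |g' y - g y| = |(g' y - v ⬝ᵥ y) - (g y - v ⬝ᵥ y)| := by congr 1; ring
      _ ≤ |g' y - v ⬝ᵥ y| + |g y - v ⬝ᵥ y| := abs_sub _ _
      _ ≤ C' + ∑' k, u k := add_le_add h1 h2
  have hit : ∀ n : ℕ, g' (f^[n] x) - g (f^[n] x) = μ ^ n * (g' x - g x) := by
    intro n
    induction n with
    | zero => simp
    | succ n ih =>
      rw [Function.iterate_succ_apply', hg'f, hfeq, pow_succ]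
      linear_combination μ * ih
  have hle : ∀ n : ℕ, |g' x - g x| ≤ (C' + ∑' k, u k) / |μ| ^ n := by
    intro n
    have h1 := hD (f^[n] x)
    rw [hit n, abs_mul, abs_pow] at h1
    rw [le_div_iff₀ (by positivity)]
    linarith [h1]
  have hlim : Tendsto (fun n : ℕ => (C' + ∑' k, u k) / |μ| ^ n) atTop (nhds 0) := by
    have h1 := (tendsto_pow_atTop_nhds_zero_of_lt_one hinv0 hinv).const_mul (C' + ∑' k, u k)
    rw [mul_zero] at h1
    refine h1.congr fun n => ?_
    rw [inv_pow, div_eq_mul_inv]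
  have h0 : |g' x - g x| ≤ 0 := ge_of_tendsto' hlim hle
  have := abs_nonneg (g' x - g x)
  have : g' x - g x = 0 := abs_eq_zero.mp (le_antisymm h0 this)
  linarith
end

section
/- Let f̃ : ℝ^b → ℝ^b be an A-equivariant lift with A expanding with constant λ > 1 for the norm ‖·‖, and let β̃ be the Franks map. Then the following are equivalent: (a) β̃ is injective (equivalently, the induced semiconjugacy β : 𝕋^b → 𝕋^b is injective); (b) there exist a metric d̃ on ℝ^b inducing the standard topology, which is ℤ^b-equivariant (d̃(x̃ + n, ỹ + n) = d̃(x̃, ỹ) for all n ∈ ℤ^b), and a constant λ' > 1 such that d̃(f̃(x̃), f̃(ỹ)) ≥ λ' d̃(x̃, ỹ) for all x̃, ỹ; (c) whenever sup_{i∈ℕ} ‖f̃^i(x̃) − f̃^i(x̃')‖ < ∞ one has x̃ = x̃' (no two distinct points shadow under f̃). -/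
open Matrix Filter

/-- For an `H₁`-expanding situation the following are equivalent: (a) the Franks
map `β̃` is injective; (b) there is a `ℤ^b`-equivariant metric on `ℝ^b` inducing the standard
topology in which `f̃` expands by a factor `λ' > 1`; (c) no two distinct points shadow under
`f̃`. -/
theorem stmt17 (b : ℕ) (hb : 1 ≤ b) (A : Matrix (Fin b) (Fin b) ℤ)
    (f : (Fin b → ℝ) → (Fin b → ℝ)) (hcont : Continuous f)
    (hequiv : ∀ (x : Fin b → ℝ) (n : Fin b → ℤ),
      f (x + intVec n) = f x + (realMat A).mulVec (intVec n))
    (lam : ℝ) (hlam : 1 < lam) (hA : (realMat A).det ≠ 0)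
    (hexp : ∀ v : Fin b → ℝ, lam * ‖v‖ ≤ ‖(realMat A).mulVec v‖)
    (β : (Fin b → ℝ) → (Fin b → ℝ))
    (hβ : ∀ x : Fin b → ℝ, Tendsto (fun n : ℕ => ((realMat A)⁻¹ ^ n).mulVec (f^[n] x))
      atTop (nhds (β x))) :
    List.TFAE [
      Function.Injective β,
      ∃ (d : (Fin b → ℝ) → (Fin b → ℝ) → ℝ) (lam' : ℝ), 1 < lam' ∧
        (∀ x y, d x y = 0 ↔ x = y) ∧
        (∀ x y, d x y = d y x) ∧
        (∀ x y z, d x z ≤ d x y + d y z) ∧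
        (∀ (x y : Fin b → ℝ) (n : Fin b → ℤ), d (x + intVec n) (y + intVec n) = d x y) ∧
        (∀ (x : Fin b → ℝ) (s : Set (Fin b → ℝ)),
          s ∈ nhds x ↔ ∃ ε > 0, {y | d x y < ε} ⊆ s) ∧
        (∀ x y, lam' * d x y ≤ d (f x) (f y)),
      ∀ x x' : Fin b → ℝ, (∃ K : ℝ, ∀ i : ℕ, ‖f^[i] x - f^[i] x'‖ ≤ K) → x = x'
    ] := by
  have hdetU : IsUnit (realMat A).det := isUnit_iff_ne_zero.mpr hA
  set M : Matrix (Fin b) (Fin b) ℝ := realMat A with hMdef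
  have hMM : M * M⁻¹ = 1 := Matrix.mul_nonsing_inv M hdetU
  have hMM' : M⁻¹ * M = 1 := Matrix.nonsing_inv_mul M hdetU
  have hmulc : ∀ B : Matrix (Fin b) (Fin b) ℝ, Continuous fun v => B.mulVec v := by
    intro B
    have := B.mulVecLin.continuous_of_finiteDimensional
    exact this
  have hlam0 : (0:ℝ) < lam := lt_trans one_pos hlam
  have hr0 : (0:ℝ) < lam⁻¹ := inv_pos.mpr hlam0
  have hr1 : lam⁻¹ < 1 := inv_lt_one_of_one_lt₀ hlam
  have hcontr : ∀ v : Fin b → ℝ, ‖M⁻¹.mulVec v‖ ≤ lam⁻¹ * ‖v‖ := by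
    intro v
    have h := hexp (M⁻¹.mulVec v)
    rw [Matrix.mulVec_mulVec, hMM, Matrix.one_mulVec] at h
    calc ‖M⁻¹.mulVec v‖ = lam⁻¹ * (lam * ‖M⁻¹.mulVec v‖) := by field_simp
      _ ≤ lam⁻¹ * ‖v‖ := mul_le_mul_of_nonneg_left h hr0.le
  have hpowc : ∀ (k : ℕ) (v : Fin b → ℝ), ‖(M⁻¹ ^ k).mulVec v‖ ≤ lam⁻¹ ^ k * ‖v‖ := by
    intro k
    induction k with
    | zero => intro v; simp [Matrix.one_mulVec]
    | succ k ih =>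
      intro v
      rw [pow_succ, ← Matrix.mulVec_mulVec]
      calc ‖(M⁻¹ ^ k).mulVec (M⁻¹.mulVec v)‖ ≤ lam⁻¹ ^ k * ‖M⁻¹.mulVec v‖ := ih _
        _ ≤ lam⁻¹ ^ k * (lam⁻¹ * ‖v‖) := mul_le_mul_of_nonneg_left (hcontr v) (by positivity)
        _ = lam⁻¹ ^ (k+1) * ‖v‖ := by ring
  have hinvpow : ∀ k : ℕ, M⁻¹ ^ k * M ^ k = 1 := by
    intro k
    induction k with
    | zero => simp
    | succ k ih =>
      rw [pow_succ, pow_succ' M, mul_assoc, ← mul_assoc M⁻¹ M, hMM', one_mul, ih]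
  have hcast : ∀ (B : Matrix (Fin b) (Fin b) ℤ) (n : Fin b → ℤ),
      (realMat B).mulVec (intVec n) = intVec (B.mulVec n) := by
    intro B n
    funext i
    simp [realMat, intVec, Matrix.mulVec, dotProduct]
  have hmappow : ∀ k : ℕ, realMat (A ^ k) = M ^ k := by
    intro k
    show (Int.castRingHom ℝ).mapMatrix (A ^ k) = M ^ k
    rw [map_pow]; rfl
  have hiter : ∀ (k : ℕ) (x : Fin b → ℝ) (n : Fin b → ℤ),
      f^[k] (x + intVec n) = f^[k] x + intVec ((A ^ k).mulVec n) := by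
    intro k
    induction k with
    | zero => intro x n; simp [Matrix.one_mulVec]
    | succ k ih =>
      intro x n
      rw [Function.iterate_succ_apply', ih, hequiv, Function.iterate_succ_apply', hcast]
      congr 2
      rw [Matrix.mulVec_mulVec, ← pow_succ']
  have hβeq : ∀ (x : Fin b → ℝ) (n : Fin b → ℤ), β (x + intVec n) = β x + intVec n := by
    intro x n
    refine tendsto_nhds_unique (hβ (x + intVec n)) ?_
    have he : (fun k : ℕ => (M⁻¹ ^ k).mulVec (f^[k] (x + intVec n)))
        = fun k : ℕ => (M⁻¹ ^ k).mulVec (f^[k] x) + intVec n := by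
      funext k
      rw [hiter, Matrix.mulVec_add]
      congr 1
      rw [← hcast, hmappow, Matrix.mulVec_mulVec, hinvpow, Matrix.one_mulVec]
    rw [he]
    exact (hβ x).add tendsto_const_nhds
  have hβf : ∀ x, β (f x) = M.mulVec (β x) := by
    intro x
    refine tendsto_nhds_unique (hβ (f x)) ?_
    have h2 : Tendsto (fun k : ℕ => M.mulVec ((M⁻¹ ^ (k+1)).mulVec (f^[k+1] x))) atTop
        (nhds (M.mulVec (β x))) :=
      ((hmulc M).tendsto (β x)).comp ((hβ x).comp (tendsto_add_atTop_nat 1))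
    have he : (fun k : ℕ => (M⁻¹ ^ k).mulVec (f^[k] (f x)))
        = fun k : ℕ => M.mulVec ((M⁻¹ ^ (k+1)).mulVec (f^[k+1] x)) := by
      funext k
      have key : M * M⁻¹ ^ (k+1) = M⁻¹ ^ k := by
        rw [pow_succ' M⁻¹, ← mul_assoc, hMM, one_mul]
      rw [Matrix.mulVec_mulVec, key, Function.iterate_succ_apply]
    rw [he]
    exact h2
  -- bound on the displacement g = f - M
  obtain ⟨C₀, hC₀⟩ : ∃ C₀, ∀ y ∈ Set.Icc (0:Fin b → ℝ) 1, ‖f y - M.mulVec y‖ ≤ C₀ :=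
    isCompact_Icc.exists_bound_of_continuousOn ((hcont.sub (hmulc M)).continuousOn)
  have hg : ∀ y : Fin b → ℝ, ‖f y - M.mulVec y‖ ≤ max C₀ 0 := by
    intro y
    have hdec : y = (fun i => Int.fract (y i)) + intVec (fun i => ⌊y i⌋) := by
      funext i
      simp only [Pi.add_apply, intVec, Int.fract]
      ring
    have hmem : (fun i => Int.fract (y i)) ∈ Set.Icc (0:Fin b → ℝ) 1 := by
      constructor <;> intro i
      · exact Int.fract_nonneg _
      · exact (Int.fract_lt_one _).le
    have he : f y - M.mulVec y
        = f (fun i => Int.fract (y i)) - M.mulVec (fun i => Int.fract (y i)) := by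
      conv_lhs => rw [hdec]
      rw [hequiv, Matrix.mulVec_add]
      abel
    rw [he]
    exact le_max_of_le_left (hC₀ _ hmem)
  set C₁ : ℝ := max C₀ 0 with hC₁def
  have hC₁0 : 0 ≤ C₁ := le_max_right _ _
  have h1r : (0:ℝ) < 1 - lam⁻¹ := by linarith
  set Cc : ℝ := C₁ * lam⁻¹ * (1 - lam⁻¹)⁻¹ with hCcdef
  have hCc0 : 0 ≤ Cc := by positivity
  have hstep : ∀ (k : ℕ) (x : Fin b → ℝ),
      ‖(M⁻¹ ^ (k+1)).mulVec (f^[k+1] x) - (M⁻¹ ^ k).mulVec (f^[k] x)‖ ≤ C₁ * lam⁻¹ ^ (k+1) := by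
    intro k x
    have h1 : (M⁻¹ ^ k).mulVec (f^[k] x) = (M⁻¹ ^ (k+1)).mulVec (M.mulVec (f^[k] x)) := by
      rw [Matrix.mulVec_mulVec, pow_succ, mul_assoc, hMM', mul_one]
    rw [h1, Function.iterate_succ_apply', ← Matrix.mulVec_sub]
    calc ‖(M⁻¹ ^ (k+1)).mulVec (f (f^[k] x) - M.mulVec (f^[k] x))‖
        ≤ lam⁻¹ ^ (k+1) * ‖f (f^[k] x) - M.mulVec (f^[k] x)‖ := hpowc _ _
      _ ≤ lam⁻¹ ^ (k+1) * C₁ := mul_le_mul_of_nonneg_left (hg _) (by positivity)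
      _ = C₁ * lam⁻¹ ^ (k+1) := mul_comm _ _
  have hgeom : ∀ n : ℕ, ∑ j ∈ Finset.range n, lam⁻¹ ^ j ≤ (1 - lam⁻¹)⁻¹ := by
    intro n
    have h := Summable.sum_le_tsum (Finset.range n) (fun i _ => by positivity)
      (summable_geometric_of_lt_one hr0.le hr1)
    rwa [tsum_geometric_of_lt_one hr0.le hr1] at h
  have hcauchy : ∀ (x : Fin b → ℝ) (n m : ℕ), n ≤ m →
      ‖(M⁻¹ ^ m).mulVec (f^[m] x) - (M⁻¹ ^ n).mulVec (f^[n] x)‖ ≤ Cc * lam⁻¹ ^ n := by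
    intro x n m hnm
    have hd := dist_le_Ico_sum_dist (fun k => (M⁻¹ ^ k).mulVec (f^[k] x)) hnm
    have hd2 : ∑ i ∈ Finset.Ico n m,
        dist ((M⁻¹ ^ i).mulVec (f^[i] x)) ((M⁻¹ ^ (i+1)).mulVec (f^[i+1] x))
        ≤ ∑ i ∈ Finset.Ico n m, C₁ * lam⁻¹ ^ (i+1) := by
      refine Finset.sum_le_sum fun i _ => ?_
      rw [dist_eq_norm, norm_sub_rev]
      exact hstep i x
    have hd3 : ∑ i ∈ Finset.Ico n m, C₁ * lam⁻¹ ^ (i+1) ≤ Cc * lam⁻¹ ^ n := by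
      rw [Finset.sum_Ico_eq_sum_range]
      have hterm : ∀ j : ℕ, C₁ * lam⁻¹ ^ (n + j + 1) = (C₁ * lam⁻¹ ^ (n+1)) * lam⁻¹ ^ j := by
        intro j
        rw [show n + j + 1 = (n + 1) + j by omega, pow_add]
        ring
      calc ∑ j ∈ Finset.range (m - n), C₁ * lam⁻¹ ^ (n + j + 1)
          = (C₁ * lam⁻¹ ^ (n+1)) * ∑ j ∈ Finset.range (m - n), lam⁻¹ ^ j := by
            rw [Finset.mul_sum]
            exact Finset.sum_congr rfl fun j _ => hterm j
        _ ≤ (C₁ * lam⁻¹ ^ (n+1)) * (1 - lam⁻¹)⁻¹ :=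
            mul_le_mul_of_nonneg_left (hgeom _) (by positivity)
        _ = Cc * lam⁻¹ ^ n := by rw [hCcdef, pow_succ]; ring
    calc ‖(M⁻¹ ^ m).mulVec (f^[m] x) - (M⁻¹ ^ n).mulVec (f^[n] x)‖
        = dist ((M⁻¹ ^ n).mulVec (f^[n] x)) ((M⁻¹ ^ m).mulVec (f^[m] x)) := by
          rw [dist_eq_norm, norm_sub_rev]
      _ ≤ ∑ i ∈ Finset.Ico n m,
          dist ((M⁻¹ ^ i).mulVec (f^[i] x)) ((M⁻¹ ^ (i+1)).mulVec (f^[i+1] x)) := hd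
      _ ≤ ∑ i ∈ Finset.Ico n m, C₁ * lam⁻¹ ^ (i+1) := hd2
      _ ≤ Cc * lam⁻¹ ^ n := hd3
  have htail : ∀ (x : Fin b → ℝ) (n : ℕ),
      ‖β x - (M⁻¹ ^ n).mulVec (f^[n] x)‖ ≤ Cc * lam⁻¹ ^ n := by
    intro x n
    have hlim : Tendsto (fun m : ℕ => ‖(M⁻¹ ^ m).mulVec (f^[m] x) - (M⁻¹ ^ n).mulVec (f^[n] x)‖)
        atTop (nhds ‖β x - (M⁻¹ ^ n).mulVec (f^[n] x)‖) :=
      ((hβ x).sub tendsto_const_nhds).norm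
    exact le_of_tendsto hlim (eventually_atTop.mpr ⟨n, fun m hm => hcauchy x n m hm⟩)
  have hbd : ∀ x : Fin b → ℝ, ‖β x - x‖ ≤ Cc := by
    intro x
    have h := htail x 0
    simpa [Matrix.one_mulVec] using h
  have hβcont : Continuous β := by
    have hU : TendstoUniformly (fun (n : ℕ) (x : Fin b → ℝ) => (M⁻¹ ^ n).mulVec (f^[n] x)) β
        atTop := by
      rw [Metric.tendstoUniformly_iff]
      intro ε hε
      have hto : Tendsto (fun n : ℕ => Cc * lam⁻¹ ^ n) atTop (nhds 0) := by
        simpa using (tendsto_pow_atTop_nhds_zero_of_lt_one hr0.le hr1).const_mul Cc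
      filter_upwards [hto.eventually (gt_mem_nhds hε)] with n hn x
      calc dist (β x) ((M⁻¹ ^ n).mulVec (f^[n] x))
          = ‖β x - (M⁻¹ ^ n).mulVec (f^[n] x)‖ := dist_eq_norm _ _
        _ ≤ Cc * lam⁻¹ ^ n := htail x n
        _ < ε := hn
    exact hU.continuous (Frequently.of_forall fun n => (hmulc _).comp (hcont.iterate n))
  tfae_have 1 → 2 := by
    intro h1
    refine ⟨fun x y => ‖β x - β y‖, lam, hlam, ?_, ?_, ?_, ?_, ?_, ?_⟩
    · intro x y
      rw [norm_sub_eq_zero_iff]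
      exact ⟨fun h => h1 h, fun h => by rw [h]⟩
    · intro x y; exact norm_sub_rev _ _
    · intro x y z; exact norm_sub_le_norm_sub_add_norm_sub _ _ _
    · intro x y n
      show ‖β (x + intVec n) - β (y + intVec n)‖ = ‖β x - β y‖
      rw [hβeq, hβeq, add_sub_add_right_eq_sub]
    · intro x s
      constructor
      · intro hs
        obtain ⟨r, hrpos, hball⟩ := Metric.mem_nhds_iff.mp hs
        obtain ⟨ε, hε, hεT⟩ : ∃ ε > 0, ∀ y ∈ Metric.closedBall x (2*Cc+1) \ Metric.ball x r,
            ε ≤ ‖β x - β y‖ := by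
          have hTc : IsCompact (Metric.closedBall x (2*Cc+1) \ Metric.ball x r) :=
            (isCompact_closedBall x _).diff Metric.isOpen_ball
          rcases (Metric.closedBall x (2*Cc+1) \ Metric.ball x r).eq_empty_or_nonempty with
            hTe | hTne
          · exact ⟨1, one_pos, fun y hy => absurd hy (by simp [hTe])⟩
          · obtain ⟨y₀, hy₀, hmin⟩ := hTc.exists_isMinOn hTne
              ((continuous_const.sub hβcont).norm.continuousOn)
            refine ⟨‖β x - β y₀‖, ?_, fun y hy => hmin hy⟩
            rw [gt_iff_lt, norm_sub_pos_iff]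
            intro hc
            exact hy₀.2 (h1 hc ▸ Metric.mem_ball_self hrpos)
        refine ⟨min ε 1, lt_min hε one_pos, fun y hy => ?_⟩
        simp only [Set.mem_setOf_eq] at hy
        have hyK : y ∈ Metric.closedBall x (2*Cc+1) := by
          rw [Metric.mem_closedBall, dist_eq_norm]
          have e1 : y - x = -(β y - y) + (β y - β x) + (β x - x) := by abel
          have h1' : ‖-(β y - y)‖ ≤ Cc := by rw [norm_neg]; exact hbd y
          have h2' : ‖β y - β x‖ ≤ 1 := by
            rw [norm_sub_rev]
            exact (lt_of_lt_of_le hy (min_le_right _ _)).le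
          have h3' := hbd x
          calc ‖y - x‖ = ‖-(β y - y) + (β y - β x) + (β x - x)‖ := by rw [e1]
            _ ≤ ‖-(β y - y) + (β y - β x)‖ + ‖β x - x‖ := norm_add_le _ _
            _ ≤ ‖-(β y - y)‖ + ‖β y - β x‖ + ‖β x - x‖ :=
                add_le_add_left (norm_add_le _ _) _
            _ ≤ 2*Cc+1 := by linarith
        by_cases hyb : y ∈ Metric.ball x r
        · exact hball hyb
        · exact absurd (hεT y ⟨hyK, hyb⟩)
            (not_le.mpr (lt_of_lt_of_le hy (min_le_left _ _)))
      · rintro ⟨ε, hε, hsub⟩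
        refine Filter.mem_of_superset ?_ hsub
        have hop : IsOpen {y | ‖β x - β y‖ < ε} :=
          isOpen_lt ((continuous_const.sub hβcont).norm) continuous_const
        exact hop.mem_nhds (by simp [hε])
    · intro x y
      show lam * ‖β x - β y‖ ≤ ‖β (f x) - β (f y)‖
      rw [hβf, hβf, ← Matrix.mulVec_sub]
      exact hexp _
  tfae_have 2 → 3 := by
    rintro ⟨d, lam', hlam', hzero, hsym, htri, heqv, htop, hexp'⟩ x x' ⟨K, hK⟩
    have hlam'0 : (0:ℝ) < lam' := lt_trans one_pos hlam'
    have hd0 : ∀ u v, 0 ≤ d u v := by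
      intro u v
      have t := htri u v u
      have s := hsym v u
      have z := (hzero u u).mpr rfl
      linarith
    have hdc : Continuous fun p : (Fin b → ℝ) × (Fin b → ℝ) => d p.1 p.2 := by
      rw [continuous_iff_continuousAt]
      rintro ⟨u, v⟩
      rw [ContinuousAt, Metric.tendsto_nhds]
      intro ε hε
      have hU : {u' | d u u' < ε/2} ∈ nhds u := (htop u _).mpr ⟨ε/2, half_pos hε, subset_rfl⟩
      have hV : {v' | d v v' < ε/2} ∈ nhds v := (htop v _).mpr ⟨ε/2, half_pos hε, subset_rfl⟩
      have hprod : {u' | d u u' < ε/2} ×ˢ {v' | d v v' < ε/2} ∈ nhds (u, v) := by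
        rw [nhds_prod_eq]
        exact Filter.prod_mem_prod hU hV
      filter_upwards [hprod] with p hp
      obtain ⟨hp1, hp2⟩ := hp
      simp only [Set.mem_setOf_eq] at hp1 hp2
      rw [Real.dist_eq, abs_sub_lt_iff]
      have t1 := htri p.1 u p.2
      have t2 := htri u v p.2
      have t3 := htri u p.1 v
      have t4 := htri p.1 p.2 v
      have s1 := hsym u p.1
      have s2 := hsym v p.2
      have s3 := hsym p.2 v
      constructor <;> linarith
    have hgrow : ∀ i : ℕ, lam' ^ i * d x x' ≤ d (f^[i] x) (f^[i] x') := by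
      intro i
      induction i with
      | zero => simp
      | succ i ih =>
        rw [Function.iterate_succ_apply', Function.iterate_succ_apply']
        calc lam' ^ (i+1) * d x x' = lam' * (lam' ^ i * d x x') := by ring
          _ ≤ lam' * d (f^[i] x) (f^[i] x') := mul_le_mul_of_nonneg_left ih hlam'0.le
          _ ≤ d (f (f^[i] x)) (f (f^[i] x')) := hexp' _ _
    have hK0 : (0:ℝ) ≤ K := le_trans (norm_nonneg (x - x')) (by simpa using hK 0)
    have hSc : IsCompact {p : (Fin b → ℝ) × (Fin b → ℝ) | p.1 ∈ Set.Icc 0 1 ∧ ‖p.2 - p.1‖ ≤ K} := by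
      apply Metric.isCompact_of_isClosed_isBounded
      · exact ((isClosed_Icc.preimage continuous_fst).inter
          (isClosed_le ((continuous_snd.sub continuous_fst).norm) continuous_const))
      · apply Bornology.IsBounded.subset
          (Metric.isBounded_closedBall (x := ((0,0) : (Fin b → ℝ) × (Fin b → ℝ))) (r := K + 2))
        rintro ⟨p1, p2⟩ ⟨hp1, hp2⟩
        dsimp only at hp1 hp2
        rw [Set.mem_Icc] at hp1
        have hn1 : ‖p1‖ ≤ 1 := by
          rw [pi_norm_le_iff_of_nonneg zero_le_one]
          intro i
          rw [Real.norm_eq_abs, abs_le]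
          have h0 := hp1.1 i
          have h1' := hp1.2 i
          simp only [Pi.zero_apply, Pi.one_apply] at h0 h1'
          exact ⟨by linarith, h1'⟩
        have hn2 : ‖p2‖ ≤ K + 1 := by
          have := norm_add_le (p2 - p1) p1
          rw [sub_add_cancel] at this
          exact le_trans this (add_le_add hp2 hn1)
        rw [Metric.mem_closedBall]
        calc dist (p1, p2) ((0,0) : (Fin b → ℝ) × (Fin b → ℝ)) = ‖(p1, p2)‖ := by
              rw [show ((0,0) : (Fin b → ℝ) × (Fin b → ℝ)) = 0 from rfl, dist_zero_right]
          _ = max ‖p1‖ ‖p2‖ := Prod.norm_def _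
          _ ≤ K + 2 := max_le (by linarith) (by linarith)
    obtain ⟨CS, hCS⟩ := hSc.exists_bound_of_continuousOn hdc.continuousOn
    have hdbd : ∀ i : ℕ, d (f^[i] x) (f^[i] x') ≤ CS := by
      intro i
      set u := f^[i] x with hu
      set v := f^[i] x' with hv
      have hmem : (u + intVec (fun j => -⌊u j⌋), v + intVec (fun j => -⌊u j⌋))
          ∈ {p : (Fin b → ℝ) × (Fin b → ℝ) | p.1 ∈ Set.Icc 0 1 ∧ ‖p.2 - p.1‖ ≤ K} := by
        constructor
        · rw [Set.mem_Icc]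
          constructor <;> intro j
          · have h := Int.floor_le (u j)
            simp only [Pi.add_apply, Pi.zero_apply, intVec, Int.cast_neg]
            linarith
          · have h := (Int.lt_floor_add_one (u j)).le
            simp only [Pi.add_apply, Pi.one_apply, intVec, Int.cast_neg]
            linarith
        · rw [add_sub_add_right_eq_sub, norm_sub_rev]
          exact hK i
      have h := hCS _ hmem
      dsimp only at h
      rw [Real.norm_eq_abs] at h
      calc d u v = d (u + intVec (fun j => -⌊u j⌋)) (v + intVec (fun j => -⌊u j⌋)) :=
            (heqv u v (fun j => -⌊u j⌋)).symm
        _ ≤ |d (u + intVec (fun j => -⌊u j⌋)) (v + intVec (fun j => -⌊u j⌋))| := le_abs_self _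
        _ ≤ CS := h
    have hdxx : d x x' = 0 := by
      by_contra hne
      have hdpos : 0 < d x x' := lt_of_le_of_ne (hd0 x x') (Ne.symm hne)
      obtain ⟨i, hi⟩ :=
        ((tendsto_pow_atTop_atTop_of_one_lt hlam').eventually_gt_atTop (CS / d x x')).exists
      rw [div_lt_iff₀ hdpos] at hi
      linarith [hgrow i, hdbd i]
    exact (hzero x x').mp hdxx
  tfae_have 3 → 1 := by
    intro h3 x x' hxx'
    apply h3
    have hβiter : ∀ (i : ℕ) (y : Fin b → ℝ), β (f^[i] y) = (M ^ i).mulVec (β y) := by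
      intro i
      induction i with
      | zero => intro y; simp [Matrix.one_mulVec]
      | succ i ih =>
        intro y
        rw [Function.iterate_succ_apply', hβf, ih, Matrix.mulVec_mulVec, ← pow_succ']
    refine ⟨2 * Cc, fun i => ?_⟩
    have he : β (f^[i] x) = β (f^[i] x') := by rw [hβiter, hβiter, hxx']
    have e1 : f^[i] x - f^[i] x' = (f^[i] x - β (f^[i] x)) + (β (f^[i] x') - f^[i] x') := by
      rw [he]; abel
    calc ‖f^[i] x - f^[i] x'‖
        = ‖(f^[i] x - β (f^[i] x)) + (β (f^[i] x') - f^[i] x')‖ := by rw [e1]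
      _ ≤ ‖f^[i] x - β (f^[i] x)‖ + ‖β (f^[i] x') - f^[i] x'‖ := norm_add_le _ _
      _ ≤ Cc + Cc := add_le_add (by rw [norm_sub_rev]; exact hbd _) (hbd _)
      _ = 2 * Cc := by ring
  tfae_finish
end
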